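/- arXiv:1503.02149 — 2 statements merged into one kernel-verified Lean document; each statement's English description precedes it below -/
import Mathlib

section
/- There exists an absolute constant C_a > 0, not depending on the subordinator X, such that for every t > 0, δ > 0, and x > 0, P(N(t,δ) ≥ x) ≤ exp(2C_a t / U(δ) − x/8). -/
open MeasureTheory ProbabilityTheory Filter Topology Real Set

/-- A subordinator: a non-decreasing right-continuous Lévy process started at 0,
with drift `d`, Lévy measure `ν` and Laplace exponent
`Φ(λ) = dλ + ∫ (1 - e^{-λy}) ν(dy)`. -/
structure IsSubordinator {Ω : Type*} [MeasurableSpace Ω] (P : Measure Ω)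
    (X : ℝ → Ω → ℝ) (d : ℝ) (ν : Measure ℝ) : Prop where
  isProb : IsProbabilityMeasure P
  meas : ∀ t : ℝ, Measurable (X t)
  start : ∀ ω, X 0 ω = 0
  mono : ∀ ω, Monotone fun t => X t ω
  rightCont : ∀ ω t, ContinuousWithinAt (fun s => X s ω) (Set.Ici t) t
  drift_nonneg : 0 ≤ d
  levy_integrable : ∫⁻ y in Set.Ioi (0:ℝ), ENNReal.ofReal (min 1 y) ∂ν ≠ ⊤
  laplace : ∀ l : ℝ, 0 < l → ∀ t : ℝ, 0 ≤ t →
      ∫ ω, Real.exp (-l * X t ω) ∂P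
        = Real.exp (-t * (d * l + ∫ y in Set.Ioi (0:ℝ), (1 - Real.exp (-l * y)) ∂ν))
  indep_incr : ∀ t : ℕ → ℝ, Monotone t → 0 ≤ t 0 →
      iIndepFun (fun i ω => X (t (i+1)) ω - X (t i) ω) P
  stat_incr : ∀ s t : ℝ, 0 ≤ s → 0 ≤ t →
      IdentDistrib (fun ω => X (s + t) ω - X s ω) (X t) P P

/-- The successive passage times `T_n(δ)`: `T_0 = 0` and
`T_{n+1} = inf {t ≥ T_n : X_t - X_{T_n} > δ}`. -/
noncomputable def passage {Ω : Type*} (X : ℝ → Ω → ℝ) (δ : ℝ) : ℕ → Ω → ℝ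
  | 0 => fun _ => 0
  | n + 1 => fun ω =>
      sInf {t : ℝ | passage X δ n ω ≤ t ∧ δ < X t ω - X (passage X δ n ω) ω}

/-- `N(t,δ)`: the minimal number of intervals of length at most `δ` needed to
cover the range `{X_s : s ≤ t}`, realised through the passage times. -/
noncomputable def coverN {Ω : Type*} (X : ℝ → Ω → ℝ) (t δ : ℝ) (ω : Ω) : ℕ :=
  sSup {k : ℕ | passage X δ k ω ≤ t}

/-- The potential function `U(δ) = ∫₀^∞ P(X_t ≤ δ) dt`. -/
noncomputable def potU {Ω : Type*} [MeasurableSpace Ω] (P : Measure Ω)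
    (X : ℝ → Ω → ℝ) (δ : ℝ) : ℝ :=
  ∫ t in Set.Ioi (0:ℝ), (P {ω | X t ω ≤ δ}).toReal

/-- The `q`-potential `U_q(δ) = ∫₀^∞ e^{-qt} P(X_t ≤ δ) dt`. -/
noncomputable def potUq {Ω : Type*} [MeasurableSpace Ω] (P : Measure Ω)
    (X : ℝ → Ω → ℝ) (q δ : ℝ) : ℝ :=
  ∫ t in Set.Ioi (0:ℝ), Real.exp (-q * t) * (P {ω | X t ω ≤ δ}).toReal

section helpers

lemma chord1 {w : ℝ} (h0 : 0 ≤ w) (h1 : w ≤ 1) :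
    Real.exp (w / 4) ≤ 1 + (Real.exp (1/4) - 1) * w := by
  have := convexOn_exp.2 (Set.mem_univ (0:ℝ)) (Set.mem_univ (1/4 : ℝ))
    (by linarith : (0:ℝ) ≤ 1 - w) h0 (by ring)
  simp only [smul_eq_mul] at this
  calc Real.exp (w/4) = Real.exp ((1-w) * 0 + w * (1/4)) := by ring_nf
    _ ≤ (1-w) * Real.exp 0 + w * Real.exp (1/4) := this
    _ = 1 + (Real.exp (1/4) - 1) * w := by rw [Real.exp_zero]; ring

lemma one_sub_exp_neg_one_pos : (0:ℝ) < 1 - Real.exp (-1) := by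
  have : Real.exp (-1) < 1 := Real.exp_lt_one_iff.2 (by norm_num)
  linarith

lemma chord2 {u : ℝ} (hu : 0 ≤ u) :
    min u 1 ≤ (1 - Real.exp (-1))⁻¹ * (1 - Real.exp (-u)) := by
  have hpos := one_sub_exp_neg_one_pos
  rcases le_total u 1 with h | h
  · have := convexOn_exp.2 (Set.mem_univ (0:ℝ)) (Set.mem_univ (-1 : ℝ))
      (by linarith : (0:ℝ) ≤ 1 - u) hu (by ring)
    simp only [smul_eq_mul] at this
    have h2 : Real.exp (-u) ≤ 1 - (1 - Real.exp (-1)) * u := by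
      calc Real.exp (-u) = Real.exp ((1-u) * 0 + u * (-1)) := by ring_nf
        _ ≤ (1-u) * Real.exp 0 + u * Real.exp (-1) := this
        _ = 1 - (1 - Real.exp (-1)) * u := by rw [Real.exp_zero]; ring
    rw [min_eq_left h]
    calc u = (1 - Real.exp (-1))⁻¹ * ((1 - Real.exp (-1)) * u) := by field_simp
      _ ≤ (1 - Real.exp (-1))⁻¹ * (1 - Real.exp (-u)) := by
          apply mul_le_mul_of_nonneg_left (by linarith) (by positivity)
  · rw [min_eq_right h]
    have h3 : Real.exp (-u) ≤ Real.exp (-1) := Real.exp_le_exp.2 (by linarith)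
    calc (1:ℝ) = (1 - Real.exp (-1))⁻¹ * (1 - Real.exp (-1)) := by field_simp
      _ ≤ (1 - Real.exp (-1))⁻¹ * (1 - Real.exp (-u)) := by
          apply mul_le_mul_of_nonneg_left (by linarith) (by positivity)

lemma min_add_min {p q δ : ℝ} (hp : 0 ≤ p) (hq : 0 ≤ q) (hδ : 0 ≤ δ) :
    min (p + q) δ ≤ min p δ + min q δ := by
  rcases le_total p δ with h | h
  · rcases le_total q δ with h' | h'
    · rw [min_eq_left h, min_eq_left h']; exact min_le_left _ _
    · rw [min_eq_left h, min_eq_right h']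
      have := min_le_right (p+q) δ; linarith
  · rw [min_eq_right h]
    have h1 := min_le_right (p+q) δ
    have h2 : 0 ≤ min q δ := le_min hq hδ
    linarith

lemma min_sum_le {s : Finset ℕ} {a : ℕ → ℝ} {δ : ℝ} (hδ : 0 ≤ δ)
    (ha : ∀ j ∈ s, 0 ≤ a j) :
    min (∑ j ∈ s, a j) δ ≤ ∑ j ∈ s, min (a j) δ := by
  classical
  induction s using Finset.induction_on with
  | empty => simp [min_eq_left hδ]
  | insert i s' hnot ih =>
    rw [Finset.sum_insert hnot, Finset.sum_insert hnot]
    have h1 : 0 ≤ ∑ j ∈ s', a j :=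
      Finset.sum_nonneg (fun j hj => ha j (Finset.mem_insert_of_mem hj))
    calc min (a i + ∑ j ∈ s', a j) δ ≤ min (a i) δ + min (∑ j ∈ s', a j) δ :=
          min_add_min (ha i (Finset.mem_insert_self _ _)) h1 hδ
      _ ≤ min (a i) δ + ∑ j ∈ s', min (a j) δ := by
          have := ih (fun j hj => ha j (Finset.mem_insert_of_mem hj)); linarith

lemma sum_range_double (m : ℕ) (F : ℕ → ℝ) :
    ∑ j ∈ Finset.range (2 * m), F j = ∑ j ∈ Finset.range m, (F (2*j) + F (2*j+1)) := by
  induction m with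
  | zero => simp
  | succ m ih =>
    have h : 2 * (m+1) = (2*m) + 1 + 1 := by ring
    rw [h, Finset.sum_range_succ, Finset.sum_range_succ, ih, Finset.sum_range_succ]
    ring

lemma telescope_Ico (f : ℕ → ℝ) {m n : ℕ} (h : m ≤ n) :
    ∑ i ∈ Finset.Ico m n, (f (i+1) - f i) = f n - f m := by
  rw [Finset.sum_Ico_eq_sub _ h, Finset.sum_range_sub, Finset.sum_range_sub]; ring

lemma exp_quarter_lt : Real.exp (1/4 : ℝ) ≤ 1.2845 := by
  have he1 : Real.exp 1 < 2.7182818286 := Real.exp_one_lt_d9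
  have hq : Real.exp (1/4 : ℝ) ^ (4:ℕ) = Real.exp 1 := by
    rw [← Real.exp_nat_mul]; norm_num
  by_contra hgt
  push_neg at hgt
  have hp : (0:ℝ) < Real.exp (1/4) := Real.exp_pos _
  have h2 : (1.2845:ℝ)^2 < Real.exp ((1:ℝ)/4)^2 := by nlinarith
  have h4 : ((1.2845:ℝ)^2)^2 < (Real.exp ((1:ℝ)/4)^2)^2 := by nlinarith
  have hre : (Real.exp ((1:ℝ)/4)^2)^2 = Real.exp ((1:ℝ)/4)^(4:ℕ) := by ring
  rw [hre, hq] at h4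
  norm_num at h4
  linarith

lemma kappa_bound :
    (Real.exp (1/4) - 1) * (1 - Real.exp (-1))⁻¹ * Real.exp 1 ≤ 2 := by
  have he1 : Real.exp 1 < 2.7182818286 := Real.exp_one_lt_d9
  have hqlt := exp_quarter_lt
  have hb1 : Real.exp (-1 : ℝ) ≤ 0.368 := by
    rw [Real.exp_neg, inv_le_comm₀ (by positivity) (by norm_num)]
    nlinarith [Real.exp_one_gt_d9]
  have hpos := one_sub_exp_neg_one_pos
  have h1e : (1:ℝ) ≤ Real.exp (1/4) := Real.one_le_exp (by norm_num)
  have hker : (Real.exp (1/4) - 1) * Real.exp 1 ≤ 2 * (1 - Real.exp (-1)) := by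
    have := mul_le_mul (by linarith : Real.exp (1/4) - 1 ≤ (0.2845:ℝ))
      (le_of_lt he1) (Real.exp_pos 1).le (by norm_num)
    nlinarith
  calc (Real.exp (1/4) - 1) * (1 - Real.exp (-1))⁻¹ * Real.exp 1
      = ((Real.exp (1/4) - 1) * Real.exp 1) * (1 - Real.exp (-1))⁻¹ := by ring
    _ ≤ (2 * (1 - Real.exp (-1))) * (1 - Real.exp (-1))⁻¹ := by
        apply mul_le_mul_of_nonneg_right hker (by positivity)
    _ = 2 := by field_simp

/-- the per-cell pointwise bound -/
lemma cell_bound {v δ : ℝ} (hδ : 0 < δ) (hv : 0 ≤ v) :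
    Real.exp (1/(4*δ) * min v δ)
      ≤ 1 + (Real.exp (1/4) - 1) * (1 - Real.exp (-1))⁻¹ * (1 - Real.exp (-(1/δ) * v)) := by
  have hW0 : 0 ≤ min (v/δ) 1 := le_min (by positivity) zero_le_one
  have hW1 : min (v/δ) 1 ≤ 1 := min_le_right _ _
  have harg : 1/(4*δ) * min v δ = (min (v/δ) 1) / 4 := by
    rcases le_total v δ with h | h
    · rw [min_eq_left h, min_eq_left (by rw [div_le_one hδ]; exact h)]
      field_simp
      try left; try ring_nf
      try trivial
    · rw [min_eq_right h, min_eq_right (by rw [le_div_iff₀ hδ]; simpa using h)]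
      field_simp
  have hchain : min (v/δ) 1 ≤ (1 - Real.exp (-1))⁻¹ * (1 - Real.exp (-(1/δ) * v)) := by
    have := chord2 (u := v/δ) (by positivity)
    rwa [show -(v/δ) = -(1/δ) * v by ring] at this
  have h1 := chord1 hW0 hW1
  rw [harg]
  refine h1.trans ?_
  have henn : 0 ≤ Real.exp (1/4) - 1 := by
    have := Real.one_le_exp (by norm_num : (0:ℝ) ≤ 1/4); linarith
  have := mul_le_mul_of_nonneg_left hchain henn
  linarith [this]

end helpers


lemma pathwise {Ω : Type} (X : ℝ → Ω → ℝ) (ω : Ω) {t δ x : ℝ}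
    (ht : 0 < t) (hδ : 0 < δ) (hx : 0 < x)
    (hmono : Monotone fun s => X s ω)
    (hrc : ∀ a, ContinuousWithinAt (fun s => X s ω) (Set.Ici a) a)
    (hcov : x ≤ (coverN X t δ ω : ℝ)) :
    ∃ n : ℕ, x * δ / 2 ≤
      ∑ j ∈ Finset.range (2^n),
        min (X ((↑(j+1) : ℝ) * (t/2^n)) ω - X ((↑j : ℝ) * (t/2^n)) ω) δ := by
  classical
  let T : ℕ → ℝ := fun k => passage X δ k ω
  have hT0 : T 0 = 0 := rfl
  have hTsucc : ∀ i, T (i+1) = sInf {s : ℝ | T i ≤ s ∧ δ < X s ω - X (T i) ω} :=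
    fun _ => rfl
  have hKrep : coverN X t δ ω = sSup {k : ℕ | T k ≤ t} := rfl
  set K := {k : ℕ | T k ≤ t} with hKdef
  have hK0 : (0:ℕ) ∈ K := by
    simp only [hKdef, Set.mem_setOf_eq, hT0]; exact ht.le
  have hKne : K.Nonempty := ⟨0, hK0⟩
  rw [hKrep] at hcov
  have hbdd : BddAbove K := by
    by_contra hb
    rw [csSup_of_not_bddAbove hb, csSup_empty] at hcov
    norm_num at hcov
    linarith
  have hk0K : sSup K ∈ K := Nat.sSup_mem hKne hbdd
  set k0 := sSup K with hk0
  have hxk0 : x ≤ (k0 : ℝ) := hcov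
  have hk0pos : 0 < k0 := by
    rcases Nat.eq_zero_or_pos k0 with h | h
    · rw [h] at hxk0; norm_num at hxk0; linarith
    · exact h
  -- all passage sets are nonempty
  have hne : ∀ i : ℕ, {s : ℝ | T i ≤ s ∧ δ < X s ω - X (T i) ω}.Nonempty := by
    intro i
    by_contra hemp
    rw [Set.not_nonempty_iff_eq_empty] at hemp
    have hTi1 : T (i+1) = 0 := by rw [hTsucc i, hemp, Real.sInf_empty]
    have hshift : ∀ j, T (i+1+j) = T j := by
      intro j
      induction j with
      | zero => simpa [hT0] using hTi1
      | succ j ih =>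
        rw [show i+1+(j+1) = (i+1+j)+1 by ring, hTsucc, hTsucc, ih]
    have hmul : ∀ m : ℕ, T (m*(i+1)) = 0 := by
      intro m
      induction m with
      | zero => simpa using hT0
      | succ m ih => rw [show (m+1)*(i+1) = (i+1) + m*(i+1) by ring, hshift, ih]
    obtain ⟨b, hb⟩ := hbdd
    have hmem : (b+1)*(i+1) ∈ K := by
      simp only [hKdef, Set.mem_setOf_eq, hmul]; exact ht.le
    have h1 := hb hmem
    have h2 : b+1 ≤ (b+1)*(i+1) := Nat.le_mul_of_pos_right _ (Nat.succ_pos i)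
    omega
  have hTmono1 : ∀ i, T i ≤ T (i+1) := by
    intro i; rw [hTsucc]
    exact le_csInf (hne i) (fun s hs => hs.1)
  have hTmono : Monotone T := monotone_nat_of_le_succ hTmono1
  have hgap : ∀ i, X (T i) ω + δ ≤ X (T (i+1)) ω := by
    intro i
    have hstep : ∀ s, T (i+1) < s → X (T i) ω + δ ≤ X s ω := by
      intro s hs
      obtain ⟨a, haS, halt⟩ := Real.lt_sInf_add_pos (hne i)
        (show 0 < s - T (i+1) by linarith)
      rw [← hTsucc i] at halt
      have h1 : X a ω ≤ X s ω := hmono (by linarith)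
      have h2 := haS.2
      linarith
    have hrc' : Filter.Tendsto (fun s => X s ω)
        (nhdsWithin (T (i+1)) (Set.Ioi (T (i+1)))) (nhds (X (T (i+1)) ω)) :=
      (hrc (T (i+1))).mono_left (nhdsWithin_mono _ Set.Ioi_subset_Ici_self)
    exact ge_of_tendsto hrc'
      (eventually_nhdsWithin_of_forall (fun s hs => hstep s hs))
  have hTlt : ∀ i, T i < T (i+1) := by
    intro i
    rcases lt_or_eq_of_le (hTmono1 i) with h | h
    · exact h
    · exfalso; have := hgap i; rw [← h] at this; linarith
  have hTnn : ∀ i, 0 ≤ T i := fun i => hT0 ▸ hTmono (Nat.zero_le i)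
  -- minimal gap
  obtain ⟨i0, hi0mem, hi0min⟩ := Finset.exists_min_image (Finset.range k0)
    (fun i => T (i+1) - T i) ⟨0, Finset.mem_range.2 hk0pos⟩
  set g := T (i0+1) - T i0 with hgdef
  have hgpos : 0 < g := by have := hTlt i0; simp only [hgdef]; linarith
  obtain ⟨n, hn⟩ := pow_unbounded_of_one_lt (t/g) (one_lt_two (α := ℝ))
  refine ⟨n, ?_⟩
  set h := t / 2^n with hh
  have h2n : (0:ℝ) < 2^n := by positivity
  have hhpos : 0 < h := by positivity
  have hhg : h < g := by
    rw [hh, div_lt_iff₀ h2n]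
    rw [div_lt_iff₀ hgpos] at hn
    linarith [hn]
  have hmh : (2^n : ℝ) * h = t := by rw [hh]; field_simp
  set F : ℕ → ℝ := fun j => min (X ((↑(j+1) : ℝ) * h) ω - X ((↑j : ℝ) * h) ω) δ with hF
  have hFnn : ∀ j, 0 ≤ F j := by
    intro j
    apply le_min _ hδ.le
    apply sub_nonneg.2
    apply hmono
    apply mul_le_mul_of_nonneg_right _ hhpos.le
    exact_mod_cast Nat.le_succ j
  set l : ℕ → ℕ := fun i => ⌊T i / h⌋₊ with hl
  set r : ℕ → ℕ := fun i => ⌈T (i+1) / h⌉₊ with hr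
  have hlh : ∀ i, (l i : ℝ) * h ≤ T i := by
    intro i
    have h1 := Nat.floor_le (show 0 ≤ T i / h from div_nonneg (hTnn i) hhpos.le)
    calc (l i : ℝ) * h ≤ (T i / h) * h := mul_le_mul_of_nonneg_right h1 hhpos.le
      _ = T i := by field_simp
  have hrh : ∀ i, T (i+1) ≤ (r i : ℝ) * h := by
    intro i
    have h1 := Nat.le_ceil (T (i+1) / h)
    calc T (i+1) = (T (i+1)/h)*h := by field_simp
      _ ≤ (r i : ℝ) * h := mul_le_mul_of_nonneg_right h1 hhpos.le
  have hrm : ∀ i, i < k0 → r i ≤ 2^n := by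
    intro i hik
    apply Nat.ceil_le.2
    rw [div_le_iff₀ hhpos]
    have hT_le_t : T (i+1) ≤ t := le_trans (hTmono (by omega : i+1 ≤ k0)) hk0K
    push_cast
    rw [hmh]
    exact hT_le_t
  have hlr : ∀ i, l i < r i := by
    intro i
    have h1 : (l i : ℝ) * h ≤ T i := hlh i
    have h2 := hrh i
    have h3 := hTlt i
    have h4 : (l i : ℝ) * h < (r i : ℝ) * h := by linarith
    have h5 : (l i : ℝ) < r i := lt_of_mul_lt_mul_right h4 hhpos.le
    exact_mod_cast h5
  have hgapsum : ∀ i, δ ≤ ∑ j ∈ Finset.Ico (l i) (r i), F j := by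
    intro i
    have htel : ∑ j ∈ Finset.Ico (l i) (r i),
        (X ((↑(j+1):ℝ)*h) ω - X ((↑j:ℝ)*h) ω)
        = X ((↑(r i):ℝ)*h) ω - X ((↑(l i):ℝ)*h) ω := by
      have := telescope_Ico (fun j : ℕ => X ((↑j:ℝ)*h) ω) (hlr i).le
      exact this
    have hbig : δ ≤ X ((↑(r i):ℝ)*h) ω - X ((↑(l i):ℝ)*h) ω := by
      have e1 : X ((↑(l i):ℝ)*h) ω ≤ X (T i) ω := hmono (hlh i)
      have e2 : X (T (i+1)) ω ≤ X ((↑(r i):ℝ)*h) ω := hmono (hrh i)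
      have := hgap i; linarith
    have hminsum := min_sum_le (s := Finset.Ico (l i) (r i))
        (a := fun j => X ((↑(j+1):ℝ)*h) ω - X ((↑j:ℝ)*h) ω) hδ.le
        (fun j _ => sub_nonneg.2 (hmono (mul_le_mul_of_nonneg_right
          (by exact_mod_cast Nat.le_succ j) hhpos.le)))
    rw [htel] at hminsum
    calc δ = min (X ((↑(r i):ℝ)*h) ω - X ((↑(l i):ℝ)*h) ω) δ := (min_eq_right hbig).symm
      _ ≤ _ := hminsum
  have hadj : ∀ i i', i' < k0 → i + 2 ≤ i' → r i ≤ l i' := by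
    intro i i' hi' hii
    have hik : i + 1 < k0 := by omega
    have hTgap : T (i+1) + g ≤ T i' := by
      have hmin := hi0min (i+1) (Finset.mem_range.2 hik)
      have h2 : T (i+2) ≤ T i' := hTmono (by omega)
      simp only [hgdef] at hmin ⊢
      have : T (i+1+1) = T (i+2) := by norm_num
      linarith [hmin, h2]
    have hTa : T (i+1) + h ≤ T i' := by linarith
    have c1 : r i ≤ ⌊T (i+1)/h⌋₊ + 1 := Nat.ceil_le_floor_add_one _
    have c2 : ⌊T (i+1)/h⌋₊ + 1 = ⌊T (i+1)/h + 1⌋₊ :=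
      (Nat.floor_add_one (div_nonneg (hTnn _) hhpos.le)).symm
    have c3 : ⌊T (i+1)/h + 1⌋₊ ≤ ⌊T i'/h⌋₊ := by
      apply Nat.floor_le_floor
      have he : T (i+1)/h + 1 = (T (i+1) + h)/h := by field_simp
      rw [he]
      gcongr
    have c4 : l i' = ⌊T i'/h⌋₊ := rfl
    omega
  -- parity splitting
  have hdisjsum : ∀ (A : Finset ℕ), (∀ i ∈ A, i < k0) →
      (∀ i i', i ∈ A → i' ∈ A → i ≠ i' → (i+2 ≤ i' ∨ i'+2 ≤ i)) →
      (A.card : ℝ) * δ ≤ ∑ j ∈ Finset.range (2^n), F j := by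
    intro A hsub hsep
    have hpd : (A : Set ℕ).PairwiseDisjoint (fun i => Finset.Ico (l i) (r i)) := by
      intro i hi i' hi' hne'
      rcases hsep i i' hi hi' hne' with hc | hc
      · apply Finset.disjoint_left.2
        intro j hj hj'
        have e1 := (Finset.mem_Ico.1 hj).2
        have e2 := (Finset.mem_Ico.1 hj').1
        have e3 := hadj i i' (hsub i' hi') hc
        omega
      · apply Finset.disjoint_left.2
        intro j hj hj'
        have e1 := (Finset.mem_Ico.1 hj).1
        have e2 := (Finset.mem_Ico.1 hj').2
        have e3 := hadj i' i (hsub i hi) hc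
        omega
    calc (A.card : ℝ) * δ = ∑ _i ∈ A, δ := by rw [Finset.sum_const, nsmul_eq_mul]
      _ ≤ ∑ i ∈ A, ∑ j ∈ Finset.Ico (l i) (r i), F j :=
          Finset.sum_le_sum (fun i _ => hgapsum i)
      _ = ∑ j ∈ A.biUnion (fun i => Finset.Ico (l i) (r i)), F j :=
          (Finset.sum_biUnion hpd).symm
      _ ≤ ∑ j ∈ Finset.range (2^n), F j := by
          apply Finset.sum_le_sum_of_subset_of_nonneg
          · intro j hj
            obtain ⟨i, hiA, hji⟩ := Finset.mem_biUnion.1 hj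
            have e1 : j < r i := (Finset.mem_Ico.1 hji).2
            have e2 : r i ≤ 2^n := hrm i (hsub i hiA)
            exact Finset.mem_range.2 (by omega)
          · intro j _ _; exact hFnn j
  set A0 := (Finset.range k0).filter (fun i => i % 2 = 0) with hA0
  set A1 := (Finset.range k0).filter (fun i => ¬ (i % 2 = 0)) with hA1
  have hcard : A0.card + A1.card = k0 := by
    rw [hA0, hA1, Finset.card_filter_add_card_filter_not, Finset.card_range]
  have hb0 : (A0.card : ℝ) * δ ≤ ∑ j ∈ Finset.range (2^n), F j := by
    apply hdisjsum A0
    · intro i hi; exact Finset.mem_range.1 (Finset.mem_filter.1 hi).1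
    · intro i i' hi hi' hne'
      have e1 := (Finset.mem_filter.1 hi).2
      have e2 := (Finset.mem_filter.1 hi').2
      omega
  have hb1 : (A1.card : ℝ) * δ ≤ ∑ j ∈ Finset.range (2^n), F j := by
    apply hdisjsum A1
    · intro i hi; exact Finset.mem_range.1 (Finset.mem_filter.1 hi).1
    · intro i i' hi hi' hne'
      have e1 := (Finset.mem_filter.1 hi).2
      have e2 := (Finset.mem_filter.1 hi').2
      omega
  have hk0sum : (k0 : ℝ) * δ ≤ 2 * ∑ j ∈ Finset.range (2^n), F j := by
    have : ((A0.card + A1.card : ℕ) : ℝ) = (A0.card : ℝ) + (A1.card : ℝ) := by push_cast; ring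
    rw [← hcard]
    push_cast
    linarith
  have hxs : x * δ ≤ (k0:ℝ) * δ := mul_le_mul_of_nonneg_right hxk0 hδ.le
  linarith

lemma grid_mono {Ω : Type} (X : ℝ → Ω → ℝ) (ω : Ω) {t δ : ℝ} (ht : 0 < t) (hδ : 0 < δ)
    (hmono : Monotone fun s => X s ω) (n : ℕ) :
    ∑ j ∈ Finset.range (2^n),
        min (X ((↑(j+1):ℝ)*(t/2^n)) ω - X ((↑j:ℝ)*(t/2^n)) ω) δ
      ≤ ∑ j ∈ Finset.range (2^(n+1)),
        min (X ((↑(j+1):ℝ)*(t/2^(n+1))) ω - X ((↑j:ℝ)*(t/2^(n+1))) ω) δ := by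
  have h2 : (2:ℕ)^(n+1) = 2 * 2^n := by rw [pow_succ]; ring
  have hgrid : ∀ m : ℕ, (0:ℝ) ≤ (m:ℝ) * (t/2^(n+1)) := by
    intro m; positivity
  have hstep : ∀ m m' : ℕ, m ≤ m' → X ((m:ℝ) * (t/2^(n+1))) ω ≤ X ((m':ℝ) * (t/2^(n+1))) ω := by
    intro m m' hmm'
    apply hmono
    apply mul_le_mul_of_nonneg_right _ (by positivity)
    exact_mod_cast hmm'
  rw [h2, sum_range_double]
  apply Finset.sum_le_sum
  intro j _
  have e0 : ((2*j : ℕ) : ℝ) * (t/2^(n+1)) = ((j:ℕ) : ℝ) * (t/2^n) := by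
    push_cast; rw [pow_succ]; field_simp
  have e2 : ((2*j+1+1 : ℕ) : ℝ) * (t/2^(n+1)) = ((j+1 : ℕ) : ℝ) * (t/2^n) := by
    push_cast; rw [pow_succ]; field_simp; ring
  rw [← e0, ← e2]
  rw [show X ((2*j+1+1 : ℕ) * (t/2^(n+1))) ω - X ((2*j : ℕ) * (t/2^(n+1))) ω
      = (X ((2*j+1 : ℕ) * (t/2^(n+1))) ω - X ((2*j : ℕ) * (t/2^(n+1))) ω)
        + (X ((2*j+1+1 : ℕ) * (t/2^(n+1))) ω - X ((2*j+1 : ℕ) * (t/2^(n+1))) ω) by ring]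
  exact min_add_min (sub_nonneg.2 (hstep _ _ (by omega)))
    (sub_nonneg.2 (hstep _ _ (by omega))) hδ.le

set_option maxHeartbeats 2000000 in
theorem coverN_tail_bound' :
    ∃ Ca : ℝ, 0 < Ca ∧
      ∀ (Ω : Type) (_ : MeasurableSpace Ω) (P : Measure Ω)
        (X : ℝ → Ω → ℝ) (d : ℝ) (ν : Measure ℝ),
        (IsProbabilityMeasure P) → (∀ t : ℝ, Measurable (X t)) → (∀ ω, X 0 ω = 0) →
        (∀ ω, Monotone fun t => X t ω) →
        (∀ ω t, ContinuousWithinAt (fun s => X s ω) (Set.Ici t) t) →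
        (0 ≤ d) →
        (∀ l : ℝ, 0 < l → ∀ t : ℝ, 0 ≤ t →
          ∫ ω, Real.exp (-l * X t ω) ∂P
            = Real.exp (-t * (d * l + ∫ y in Set.Ioi (0:ℝ), (1 - Real.exp (-l * y)) ∂ν))) →
        (∀ t : ℕ → ℝ, Monotone t → 0 ≤ t 0 →
          iIndepFun (fun i ω => X (t (i+1)) ω - X (t i) ω) P) →
        (∀ s t : ℝ, 0 ≤ s → 0 ≤ t →
          IdentDistrib (fun ω => X (s + t) ω - X s ω) (X t) P P) →
        ∀ t δ x : ℝ, 0 < t → 0 < δ → 0 < x →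
          (P {ω | x ≤ (coverN X t δ ω : ℝ)}).toReal
            ≤ Real.exp (2 * 1 * t / (∫ s in Set.Ioi (0:ℝ), (P {ω | X s ω ≤ δ}).toReal) - x / 8) := by
  refine ⟨1, one_pos, ?_⟩
  intro Ω mΩ P X d ν hprob hmeas hstart hmono hrc hdnn hlaplace hindep hstat t δ x ht hδ hx
  haveI : IsProbabilityMeasure P := hprob
  set κ : ℝ := (Real.exp (1/4) - 1) * (1 - Real.exp (-1))⁻¹ with hκdef
  have hpos1 := one_sub_exp_neg_one_pos
  have hκnn : 0 ≤ κ := by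
    apply mul_nonneg _ (by positivity)
    have := Real.one_le_exp (by norm_num : (0:ℝ) ≤ 1/4); linarith
  have hlδ : 0 < 1/δ := by positivity
  set Φ : ℝ := d * (1/δ) + ∫ y in Set.Ioi (0:ℝ), (1 - Real.exp (-(1/δ) * y)) ∂ν with hΦdef
  have hΦnn : 0 ≤ Φ := by
    rw [hΦdef]
    apply add_nonneg (mul_nonneg hdnn hlδ.le)
    apply setIntegral_nonneg measurableSet_Ioi
    intro y hy
    have : Real.exp (-(1/δ)*y) ≤ 1 := by
      apply Real.exp_le_one_iff.2
      have : (0:ℝ) < y := hy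
      nlinarith
    linarith
  have hlap : ∀ s : ℝ, 0 ≤ s →
      ∫ ω, Real.exp (-(1/δ) * X s ω) ∂P = Real.exp (-s * Φ) := by
    intro s hs
    rw [hlaplace (1/δ) hlδ s hs, ← hΦdef]
  have hXnn : ∀ s (ω' : Ω), 0 ≤ s → 0 ≤ X s ω' := by
    intro s ω' hs
    have := hmono ω' hs
    simpa [hstart ω'] using this
  set τ : ℝ := 1/(4*δ) with hτdef
  have hτpos : 0 < τ := by positivity
  -- the key uniform Chernoff bound for each dyadic level
  have key : ∀ n : ℕ,
      (P {ω' | x*δ/2 ≤ ∑ j ∈ Finset.range (2^n),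
          min (X ((↑(j+1):ℝ)*(t/2^n)) ω' - X ((↑j:ℝ)*(t/2^n)) ω') δ}).toReal
        ≤ Real.exp (κ*t*Φ - x/8) := by
    intro n
    have h2n : (0:ℝ) < 2^n := by positivity
    set h : ℝ := t/2^n with hhdef
    have hhpos : 0 < h := by positivity
    have hmh : (2^n : ℝ) * h = t := by rw [hhdef]; field_simp
    set Δ : ℕ → Ω → ℝ := fun i ω' => X ((↑(i+1):ℝ) * h) ω' - X ((↑i:ℝ) * h) ω' with hΔdef
    have hg : Measurable (fun v : ℝ => min v δ) := measurable_id.min measurable_const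
    set Y : ℕ → Ω → ℝ := fun i => (fun v => min v δ) ∘ Δ i with hYdef
    have hΔmeas : ∀ i, Measurable (Δ i) := fun i => (hmeas _).sub (hmeas _)
    have hYmeas : ∀ i, Measurable (Y i) := fun i => hg.comp (hΔmeas i)
    have hΔnn : ∀ i ω', 0 ≤ Δ i ω' := by
      intro i ω'
      apply sub_nonneg.2
      apply hmono ω'
      apply mul_le_mul_of_nonneg_right _ hhpos.le
      exact_mod_cast Nat.le_succ i
    have hY0δ : ∀ i ω', 0 ≤ Y i ω' ∧ Y i ω' ≤ δ := by
      intro i ω'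
      constructor
      · exact le_min (hΔnn i ω') hδ.le
      · exact min_le_right _ _
    -- independence
    have hmonoseq : Monotone (fun j : ℕ => (j:ℝ) * h) := by
      intro a b hab
      apply mul_le_mul_of_nonneg_right _ hhpos.le
      exact_mod_cast hab
    have hΔindep : iIndepFun Δ P := by
      have := hindep (fun j : ℕ => (j:ℝ) * h) hmonoseq (by simp)
      exact this
    have hYindep : iIndepFun Y P :=
      hΔindep.comp _ (fun _ => hg)
    -- the sum
    set S : Ω → ℝ := ∑ i ∈ Finset.range (2^n), Y i with hSdef
    have hSapp : ∀ ω', S ω' = ∑ i ∈ Finset.range (2^n), Y i ω' := by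
      intro ω'; rw [hSdef, Finset.sum_apply]
    have hSfun : S = fun ω' => ∑ i ∈ Finset.range (2^n), Y i ω' := by
      funext ω'; exact hSapp ω'
    have hSmeas : Measurable S := by
      rw [hSfun]; exact Finset.measurable_sum _ (fun i _ => hYmeas i)
    have hSbdd : ∀ ω', S ω' ≤ (2^n : ℝ) * δ := by
      intro ω'
      rw [hSapp]
      calc ∑ i ∈ Finset.range (2^n), Y i ω' ≤ ∑ _i ∈ Finset.range (2^n), δ :=
            Finset.sum_le_sum (fun i _ => (hY0δ i ω').2)
        _ = (2^n : ℝ) * δ := by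
            rw [Finset.sum_const, Finset.card_range, nsmul_eq_mul]; push_cast; ring
    have hSnn : ∀ ω', 0 ≤ S ω' := by
      intro ω'
      rw [hSapp]
      exact Finset.sum_nonneg (fun i _ => (hY0δ i ω').1)
    have hint : Integrable (fun ω' => Real.exp (τ * S ω')) P := by
      apply (integrable_const (Real.exp (τ * ((2^n : ℝ) * δ)))).mono'
        ((hSmeas.const_mul τ).exp.aestronglyMeasurable)
      apply ae_of_all
      intro ω'
      rw [Real.norm_eq_abs, abs_of_pos (Real.exp_pos _)]
      apply Real.exp_le_exp.2
      exact mul_le_mul_of_nonneg_left (hSbdd ω') hτpos.le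
    -- Chernoff
    have hcher := measure_ge_le_exp_mul_mgf (μ := P) (X := S) (x*δ/2) hτpos.le hint
    -- mgf of the sum
    have hmgfsum : mgf S P τ = ∏ i ∈ Finset.range (2^n), mgf (Y i) P τ := by
      rw [hSdef]
      exact hYindep.mgf_sum hYmeas (Finset.range (2^n))
    -- per-cell bound
    set β : ℝ := 1 + κ * (1 - Real.exp (-h * Φ)) with hβdef
    have hexpint : Integrable (fun ω' => Real.exp (-(1/δ) * X h ω')) P := by
      apply (integrable_const (1:ℝ)).mono'
        (((hmeas h).const_mul (-(1/δ))).exp.aestronglyMeasurable)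
      apply ae_of_all
      intro ω'
      rw [Real.norm_eq_abs, abs_of_pos (Real.exp_pos _)]
      apply Real.exp_le_one_iff.2
      have := hXnn h ω' hhpos.le
      nlinarith
    have hcell : ∀ i, mgf (Y i) P τ ≤ β := by
      intro i
      have hid : IdentDistrib (Δ i) (X h) P P := by
        have h0 := hstat ((i:ℝ)*h) h (by positivity) hhpos.le
        have hΔeq : Δ i = fun ω' => X ((i:ℝ)*h + h) ω' - X ((i:ℝ)*h) ω' := by
          funext ω'
          rw [hΔdef]
          simp only
          rw [show ((i+1:ℕ):ℝ)*h = (i:ℝ)*h + h by push_cast; ring]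
        rw [hΔeq]; exact h0
      have hφmeas : Measurable (fun v : ℝ => Real.exp (τ * min v δ)) :=
        (hg.const_mul τ).exp
      have hid2 := hid.comp hφmeas
      have heq1 : mgf (Y i) P τ = ∫ ω', Real.exp (τ * min (X h ω') δ) ∂P := by
        rw [mgf]
        exact hid2.integral_eq
      rw [heq1]
      have hφint : Integrable (fun ω' => Real.exp (τ * min (X h ω') δ)) P := by
        apply (integrable_const (Real.exp (τ * δ))).mono'
          ((((hmeas h).min measurable_const).const_mul τ).exp.aestronglyMeasurable)
        apply ae_of_all
        intro ω'
        rw [Real.norm_eq_abs, abs_of_pos (Real.exp_pos _)]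
        apply Real.exp_le_exp.2
        exact mul_le_mul_of_nonneg_left (min_le_right _ _) hτpos.le
      have hrhsint : Integrable (fun ω' => (1+κ) - κ * Real.exp (-(1/δ) * X h ω')) P :=
        (integrable_const (1+κ)).sub (hexpint.const_mul κ)
      have hptwise : ∀ ω', Real.exp (τ * min (X h ω') δ)
          ≤ (1+κ) - κ * Real.exp (-(1/δ) * X h ω') := by
        intro ω'
        have := cell_bound hδ (hXnn h ω' hhpos.le) (v := X h ω')
        rw [hτdef]
        rw [hκdef]
        nlinarith [this]
      calc ∫ ω', Real.exp (τ * min (X h ω') δ) ∂P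
          ≤ ∫ ω', ((1+κ) - κ * Real.exp (-(1/δ) * X h ω')) ∂P :=
            integral_mono hφint hrhsint hptwise
        _ = (1+κ) - κ * ∫ ω', Real.exp (-(1/δ) * X h ω') ∂P := by
            rw [integral_sub (integrable_const _) (hexpint.const_mul κ),
              integral_const, integral_const_mul]
            simp
        _ = β := by rw [hlap h hhpos.le, hβdef]; ring
    -- combine
    have hmgfnn : ∀ i, (0:ℝ) ≤ mgf (Y i) P τ := fun i => mgf_nonneg
    have hznn : 0 ≤ κ * (1 - Real.exp (-h * Φ)) := by
      apply mul_nonneg hκnn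
      have : Real.exp (-h * Φ) ≤ 1 := by
        apply Real.exp_le_one_iff.2
        nlinarith
      linarith
    have hβnn : 0 ≤ β := by rw [hβdef]; linarith
    have hmgfS : mgf S P τ ≤ Real.exp (κ * t * Φ) := by
      rw [hmgfsum]
      calc ∏ i ∈ Finset.range (2^n), mgf (Y i) P τ
          ≤ ∏ _i ∈ Finset.range (2^n), β :=
            Finset.prod_le_prod (fun i _ => hmgfnn i) (fun i _ => hcell i)
        _ = β ^ (2^n) := by rw [Finset.prod_const, Finset.card_range]
        _ ≤ (Real.exp (κ * (1 - Real.exp (-h * Φ)))) ^ (2^n) := by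
            apply pow_le_pow_left₀ hβnn
            rw [hβdef]
            linarith [Real.add_one_le_exp (κ * (1 - Real.exp (-h * Φ)))]
        _ = Real.exp ((2^n : ℕ) * (κ * (1 - Real.exp (-h * Φ)))) := by
            rw [← Real.exp_nat_mul]
        _ ≤ Real.exp (κ * t * Φ) := by
            apply Real.exp_le_exp.2
            have h1m : 1 - Real.exp (-h * Φ) ≤ h * Φ := by
              have := Real.add_one_le_exp (-h * Φ)
              linarith
            have : ((2^n : ℕ) : ℝ) * (κ * (1 - Real.exp (-h * Φ)))
                ≤ ((2^n : ℕ) : ℝ) * (κ * (h * Φ)) := by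
              apply mul_le_mul_of_nonneg_left _ (by positivity)
              exact mul_le_mul_of_nonneg_left h1m hκnn
            calc ((2^n : ℕ) : ℝ) * (κ * (1 - Real.exp (-h * Φ)))
                ≤ ((2^n : ℕ) : ℝ) * (κ * (h * Φ)) := this
              _ = κ * t * Φ := by push_cast; rw [← hmh]; ring
    -- finish key
    have hsetrw : {ω' | x*δ/2 ≤ ∑ j ∈ Finset.range (2^n),
        min (X ((↑(j+1):ℝ)*(t/2^n)) ω' - X ((↑j:ℝ)*(t/2^n)) ω') δ}
        = {ω' | x*δ/2 ≤ S ω'} := by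
      ext ω'
      simp only [Set.mem_setOf_eq, hSapp]
      rfl
    rw [hsetrw]
    refine hcher.trans ?_
    have hτx : -τ * (x*δ/2) = -(x/8) := by
      rw [hτdef]; field_simp; ring
    calc Real.exp (-τ * (x*δ/2)) * mgf S P τ
        ≤ Real.exp (-τ * (x*δ/2)) * Real.exp (κ*t*Φ) := by
          apply mul_le_mul_of_nonneg_left hmgfS (Real.exp_pos _).le
      _ = Real.exp (κ*t*Φ - x/8) := by
          rw [← Real.exp_add, hτx]; congr 1; ring
  -- global assembly
  set E : ℕ → Set Ω := fun n => {ω' | x*δ/2 ≤ ∑ j ∈ Finset.range (2^n),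
      min (X ((↑(j+1):ℝ)*(t/2^n)) ω' - X ((↑j:ℝ)*(t/2^n)) ω') δ} with hEdef
  have hEmono : Monotone E := by
    apply monotone_nat_of_le_succ
    intro n ω' hω'
    simp only [hEdef, Set.mem_setOf_eq] at hω' ⊢
    exact le_trans hω' (grid_mono X ω' ht hδ (hmono ω') n)
  have hincl : {ω' | x ≤ (coverN X t δ ω' : ℝ)} ⊆ ⋃ n, E n := by
    intro ω' hω'
    obtain ⟨n, hn⟩ := pathwise X ω' ht hδ hx (hmono ω') (hrc ω') hω'
    exact Set.mem_iUnion.2 ⟨n, hn⟩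
  have hPbound : P {ω' | x ≤ (coverN X t δ ω' : ℝ)}
      ≤ ENNReal.ofReal (Real.exp (κ*t*Φ - x/8)) := by
    refine (measure_mono hincl).trans ?_
    rw [hEmono.measure_iUnion]
    apply iSup_le
    intro n
    rw [← ENNReal.ofReal_toReal (measure_ne_top P (E n))]
    exact ENNReal.ofReal_le_ofReal (key n)
  have hmain : (P {ω' | x ≤ (coverN X t δ ω' : ℝ)}).toReal
      ≤ Real.exp (κ*t*Φ - x/8) := by
    have h1 := ENNReal.toReal_mono (by simp) hPbound
    rwa [ENNReal.toReal_ofReal (Real.exp_nonneg _)] at h1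
  refine hmain.trans (Real.exp_le_exp.2 ?_)
  -- κ t Φ ≤ 2·1·t / U
  set U : ℝ := ∫ s in Set.Ioi (0:ℝ), (P {ω | X s ω ≤ δ}).toReal with hUdef
  have hUnn : 0 ≤ U := by
    rw [hUdef]
    apply setIntegral_nonneg measurableSet_Ioi
    intro s _; exact ENNReal.toReal_nonneg
  have hfinal : κ * t * Φ ≤ 2 * 1 * t / U := by
    rcases eq_or_lt_of_le hΦnn with hΦ0 | hΦpos
    · rw [← hΦ0]
      simp only [mul_zero]
      positivity
    · -- Φ > 0 case
      set p : ℝ → ℝ := fun s => (P {ω' | X s ω' ≤ δ}).toReal with hpdef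
      have hpanti : Antitone p := by
        intro s s' hss'
        apply ENNReal.toReal_mono (measure_ne_top _ _)
        apply measure_mono
        intro ω' hω'
        exact le_trans (hmono ω' hss') hω'
      have hpmeas : Measurable p := hpanti.measurable
      have hpnn : ∀ s, 0 ≤ p s := fun s => ENNReal.toReal_nonneg
      have hsetmeas : ∀ s : ℝ, MeasurableSet {ω' | X s ω' ≤ δ} :=
        fun s => measurableSet_le (hmeas s) measurable_const
      have hindint : ∀ s : ℝ,
          p s = ∫ ω', Set.indicator {ω' | X s ω' ≤ δ} (fun _ => (1:ℝ)) ω' ∂P := by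
        intro s
        rw [integral_indicator_const (1:ℝ) (hsetmeas s)]
        simp [hpdef, measureReal_def]
      have hindint2 : ∀ s : ℝ,
          Integrable (Set.indicator {ω' | X s ω' ≤ δ} (fun _ => (1:ℝ))) P :=
        fun s => (integrable_const (1:ℝ)).indicator (hsetmeas s)
      have hexpint3 : ∀ s : ℝ, 0 ≤ s →
          Integrable (fun ω' => Real.exp (-(1/δ) * X s ω')) P := by
        intro s hs
        apply (integrable_const (1:ℝ)).mono'
          (((hmeas s).const_mul (-(1/δ))).exp.aestronglyMeasurable)
        apply ae_of_all
        intro ω'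
        rw [Real.norm_eq_abs, abs_of_pos (Real.exp_pos _)]
        apply Real.exp_le_one_iff.2
        have := mul_nonneg hlδ.le (hXnn s ω' hs)
        nlinarith
      -- upper pointwise bound on p
      have hub : ∀ s, 0 ≤ s → p s ≤ Real.exp 1 * Real.exp (-s * Φ) := by
        intro s hs
        rw [hindint s]
        have hexpint2 : Integrable (fun ω' => Real.exp (1 + -(1/δ) * X s ω')) P := by
          apply (integrable_const (Real.exp 1)).mono'
            ((measurable_const.add ((hmeas s).const_mul (-(1/δ)))).exp.aestronglyMeasurable)
          apply ae_of_all
          intro ω'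
          rw [Real.norm_eq_abs, abs_of_pos (Real.exp_pos _)]
          apply Real.exp_le_exp.2
          have h1 : 0 ≤ (1/δ) * X s ω' := mul_nonneg hlδ.le (hXnn s ω' hs)
          show (1:ℝ) + -(1/δ) * X s ω' ≤ 1
          linarith
        have hptw : ∀ ω', Set.indicator {ω' | X s ω' ≤ δ} (fun _ => (1:ℝ)) ω'
            ≤ Real.exp (1 + -(1/δ) * X s ω') := by
          intro ω'
          by_cases hω' : ω' ∈ {ω' | X s ω' ≤ δ}
          · rw [Set.indicator_of_mem hω']
            apply Real.one_le_exp
            have h2 : X s ω' ≤ δ := hω'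
            have h3 : (1/δ) * X s ω' ≤ (1/δ) * δ := mul_le_mul_of_nonneg_left h2 hlδ.le
            rw [one_div_mul_cancel hδ.ne'] at h3
            linarith
          · rw [Set.indicator_of_notMem hω']
            positivity
        calc ∫ ω', Set.indicator {ω' | X s ω' ≤ δ} (fun _ => (1:ℝ)) ω' ∂P
            ≤ ∫ ω', Real.exp (1 + -(1/δ) * X s ω') ∂P :=
              integral_mono (hindint2 s) hexpint2 hptw
          _ = Real.exp 1 * Real.exp (-s*Φ) := by
              have hfe : (fun ω' => Real.exp (1 + -(1/δ) * X s ω'))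
                  = fun ω' => Real.exp 1 * Real.exp (-(1/δ) * X s ω') := by
                funext ω'; rw [← Real.exp_add]
              rw [hfe, integral_const_mul, hlap s hs]
      -- integrability of p on Ioi 0
      have hDint : IntegrableOn (fun s => Real.exp 1 * Real.exp (-Φ * s))
          (Set.Ioi (0:ℝ)) volume :=
        (exp_neg_integrableOn_Ioi 0 hΦpos).const_mul _
      have hpint : IntegrableOn p (Set.Ioi (0:ℝ)) volume := by
        apply Integrable.mono' hDint (hpmeas.aestronglyMeasurable.restrict)
        rw [ae_restrict_iff' measurableSet_Ioi]
        apply ae_of_all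
        intro s hs
        rw [Real.norm_eq_abs, abs_of_nonneg (hpnn s)]
        calc p s ≤ Real.exp 1 * Real.exp (-s*Φ) := hub s (le_of_lt hs)
          _ = Real.exp 1 * Real.exp (-Φ*s) := by rw [show -s*Φ = -Φ*s by ring]
      -- upper bound on U
      have hUub : U ≤ Real.exp 1 / Φ := by
        rw [hUdef]
        have hstep1 : ∫ s in Set.Ioi (0:ℝ), p s
            ≤ ∫ s in Set.Ioi (0:ℝ), Real.exp 1 * Real.exp (-Φ*s) := by
          apply setIntegral_mono_on hpint hDint measurableSet_Ioi
          intro s hs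
          calc p s ≤ Real.exp 1 * Real.exp (-s*Φ) := hub s (le_of_lt hs)
            _ = Real.exp 1 * Real.exp (-Φ*s) := by rw [show -s*Φ = -Φ*s by ring]
        have hstep2 : ∫ s in Set.Ioi (0:ℝ), Real.exp 1 * Real.exp (-Φ*s)
            = Real.exp 1 / Φ := by
          rw [integral_const_mul]
          have hcv : ∫ s in Set.Ioi (0:ℝ), Real.exp (-Φ*s)
              = Φ⁻¹ * ∫ u in Set.Ioi (Φ*0), Real.exp (-u) := by
            have h1 := integral_comp_mul_left_Ioi (fun u => Real.exp (-u)) 0 hΦpos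
            simp only [smul_eq_mul] at h1
            rw [← h1]
            congr 1
            funext s
            rw [neg_mul]
          rw [hcv, mul_zero, integral_exp_neg_Ioi, neg_zero, Real.exp_zero]
          ring
        calc ∫ s in Set.Ioi (0:ℝ), p s ≤ _ := hstep1
          _ = Real.exp 1 / Φ := hstep2
      -- lower pointwise bound on p
      have hlb : ∀ s, 0 ≤ s → Real.exp (-s*Φ) - Real.exp (-1) ≤ p s := by
        intro s hs
        rw [hindint s]
        have h1 : ∀ ω', Real.exp (-(1/δ) * X s ω') - Real.exp (-1)
            ≤ Set.indicator {ω' | X s ω' ≤ δ} (fun _ => (1:ℝ)) ω' := by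
          intro ω'
          by_cases hω' : ω' ∈ {ω' | X s ω' ≤ δ}
          · rw [Set.indicator_of_mem hω']
            have h2 : Real.exp (-(1/δ) * X s ω') ≤ 1 := by
              apply Real.exp_le_one_iff.2
              have := mul_nonneg hlδ.le (hXnn s ω' hs)
              linarith
            have := Real.exp_pos (-1:ℝ); linarith
          · rw [Set.indicator_of_notMem hω']
            have h2 : δ < X s ω' := lt_of_not_ge hω'
            have h3 : Real.exp (-(1/δ) * X s ω') ≤ Real.exp (-1) := by
              apply Real.exp_le_exp.2
              have h4 : (1/δ)*δ ≤ (1/δ) * X s ω' := mul_le_mul_of_nonneg_left h2.le hlδ.le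
              rw [one_div_mul_cancel hδ.ne'] at h4
              linarith
            linarith
        have hintlhs : Integrable
            (fun ω' => Real.exp (-(1/δ) * X s ω') - Real.exp (-1)) P :=
          (hexpint3 s hs).sub (integrable_const _)
        calc Real.exp (-s*Φ) - Real.exp (-1)
            = ∫ ω', (Real.exp (-(1/δ) * X s ω') - Real.exp (-1)) ∂P := by
              rw [integral_sub (hexpint3 s hs) (integrable_const _), hlap s hs,
                integral_const]
              simp
          _ ≤ ∫ ω', Set.indicator {ω' | X s ω' ≤ δ} (fun _ => (1:ℝ)) ω' ∂P :=
              integral_mono hintlhs (hindint2 s) h1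
      -- positivity of U
      set ρ : ℝ := Real.exp (-(1:ℝ)/2) - Real.exp (-1) with hρdef
      have hρpos : 0 < ρ := by
        rw [hρdef]
        have := Real.exp_lt_exp.2 (show (-1:ℝ) < -(1:ℝ)/2 by norm_num)
        linarith
      set s1 : ℝ := 1/(2*Φ) with hs1def
      have hs1pos : 0 < s1 := by rw [hs1def]; exact div_pos one_pos (by linarith)
      have hps1 : ρ ≤ p s1 := by
        have h1 := hlb s1 hs1pos.le
        have h2 : -s1*Φ = -(1:ℝ)/2 := by
          rw [hs1def]; field_simp
        rw [h2] at h1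
        rw [hρdef]
        exact h1
      have hUlb : s1 * ρ ≤ U := by
        rw [hUdef]
        have hIocint : IntegrableOn p (Set.Ioc (0:ℝ) s1) volume :=
          hpint.mono_set Set.Ioc_subset_Ioi_self
        have hconst : ∫ _s in Set.Ioc (0:ℝ) s1, ρ = s1 * ρ := by
          rw [setIntegral_const, measureReal_def, Real.volume_Ioc, smul_eq_mul]
          rw [ENNReal.toReal_ofReal (by linarith)]
          ring
        have hstep1 : s1 * ρ ≤ ∫ s in Set.Ioc (0:ℝ) s1, p s := by
          rw [← hconst]
          apply setIntegral_mono_on (integrableOn_const (by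
            rw [Real.volume_Ioc]; exact ENNReal.ofReal_ne_top)) hIocint measurableSet_Ioc
          intro s hs
          have h5 : p s1 ≤ p s := hpanti (Set.mem_Ioc.1 hs).2
          linarith [hps1]
        have hstep2 : ∫ s in Set.Ioc (0:ℝ) s1, p s ≤ ∫ s in Set.Ioi (0:ℝ), p s := by
          apply setIntegral_mono_set hpint
          · apply ae_restrict_of_ae
            apply ae_of_all
            intro s; exact hpnn s
          · exact Set.Ioc_subset_Ioi_self.eventuallyLE
        linarith
      have hUpos : 0 < U := lt_of_lt_of_le (mul_pos hs1pos hρpos) hUlb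
      -- final arithmetic
      have h2U : κ*Φ*U ≤ 2 := by
        calc κ*Φ*U ≤ κ*Φ*(Real.exp 1/Φ) :=
              mul_le_mul_of_nonneg_left hUub (mul_nonneg hκnn hΦnn)
          _ = κ*Real.exp 1 := by field_simp
          _ ≤ 2 := by rw [hκdef]; exact kappa_bound
      rw [le_div_iff₀ hUpos]
      nlinarith [h2U, ht.le, mul_nonneg (sub_nonneg.2 h2U) ht.le]
  calc κ*t*Φ - x/8 ≤ 2*1*t/U - x/8 := by linarith

/-- there is an absolute constant `C_a > 0`, not depending on the
subordinator, such that `P(N(t,δ) ≥ x) ≤ exp(2 C_a t / U(δ) - x/8)` for all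
`t, δ, x > 0`. -/
theorem coverN_tail_bound :
    ∃ Ca : ℝ, 0 < Ca ∧
      ∀ (Ω : Type) (_ : MeasurableSpace Ω) (P : Measure Ω)
        (X : ℝ → Ω → ℝ) (d : ℝ) (ν : Measure ℝ),
        IsSubordinator P X d ν →
        ∀ t δ x : ℝ, 0 < t → 0 < δ → 0 < x →
          (P {ω | x ≤ (coverN X t δ ω : ℝ)}).toReal
            ≤ Real.exp (2 * Ca * t / potU P X δ - x / 8) := by
  refine ⟨1, one_pos, ?_⟩
  intro Ω mΩ P X d ν hsub t δ x ht hδ hx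
  obtain ⟨_, _, hmain⟩ := coverN_tail_bound'
  have := hmain Ω mΩ P X d ν hsub.isProb hsub.meas hsub.start hsub.mono
    hsub.rightCont hsub.drift_nonneg hsub.laplace hsub.indep_incr hsub.stat_incr
    t δ x ht hδ hx
  simpa [potU] using this
end

section
/- There exist absolute constants M and K, not depending on the subordinator X, such that for all t > 0 and δ > 0, E[N(t,δ)²] ≤ M·t²/U(δ)² + K; in particular Var(N(t,δ)) ≤ M·t²/U(δ)² + K. -/
open MeasureTheory ProbabilityTheory Filter Topology Real Set

open scoped ENNReal NNReal


-- auxiliary real inequalities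
lemma aux_one_sub_exp_le (x : ℝ) : 1 - Real.exp (-x) ≤ x := by
  have h := Real.add_one_le_exp (-x)
  linarith

lemma aux_chord {u : ℝ} (h0 : 0 ≤ u) (h1 : u ≤ 1) :
    Real.exp (-u) ≤ 1 - u * (1 - Real.exp (-1)) := by
  have := convexOn_exp.2 (mem_univ (0:ℝ)) (mem_univ (-1:ℝ))
    (by linarith : (0:ℝ) ≤ 1 - u) h0 (by ring)
  simp only [smul_eq_mul, mul_zero, zero_add, mul_neg, mul_one, Real.exp_zero] at this
  calc Real.exp (-u) = Real.exp ((1-u) * 0 + u * (-1)) := by ring_nf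
    _ ≤ (1-u) * 1 + u * Real.exp (-1) := by
        have := convexOn_exp.2 (mem_univ (0:ℝ)) (mem_univ (-1:ℝ))
          (by linarith : (0:ℝ) ≤ 1 - u) h0 (by ring)
        simpa [Real.exp_zero] using this
    _ = 1 - u * (1 - Real.exp (-1)) := by ring

lemma aux_min_le {δ y : ℝ} (hδ : 0 < δ) (hy : 0 ≤ y) :
    min δ y * (1 - Real.exp (-1)) ≤ δ * (1 - Real.exp (-(δ⁻¹ * y))) := by
  have he1 : Real.exp (-1) < 1 := by
    rw [Real.exp_lt_one_iff]; norm_num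
  rcases le_total y δ with h | h
  · rw [min_eq_right h]
    have hu0 : 0 ≤ δ⁻¹ * y := by positivity
    have hu1 : δ⁻¹ * y ≤ 1 := by
      rw [inv_mul_le_iff₀ hδ]; simpa using h
    have := aux_chord hu0 hu1
    have hy' : y = δ * (δ⁻¹ * y) := by field_simp
    nlinarith [this, hδ.le]
  · rw [min_eq_left h]
    have : Real.exp (-(δ⁻¹ * y)) ≤ Real.exp (-1) := by
      apply Real.exp_le_exp.2
      have : (1:ℝ) ≤ δ⁻¹ * y := by
        rw [le_inv_mul_iff₀ hδ]; simpa using h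
      linarith
    nlinarith [hδ.le]

lemma aux_min_subadd {δ p q : ℝ} (hδ : 0 ≤ δ) (hp : 0 ≤ p) (hq : 0 ≤ q) :
    min δ (p + q) ≤ min δ p + min δ q := by
  rcases le_or_gt δ p with h | h
  · have h1 : min δ p = δ := min_eq_left h
    have h2 : 0 ≤ min δ q := le_min hδ hq
    have h3 : min δ (p+q) ≤ δ := min_le_left _ _
    linarith
  · rcases le_or_gt δ q with h' | h'
    · have h1 : min δ q = δ := min_eq_left h'
      have h2 : 0 ≤ min δ p := le_min hδ hp
      have h3 : min δ (p+q) ≤ δ := min_le_left _ _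
      linarith
    · have h1 : min δ p = p := min_eq_right h.le
      have h2 : min δ q = q := min_eq_right h'.le
      have h3 : min δ (p+q) ≤ p + q := min_le_right _ _
      linarith

noncomputable def phiL {Ω : Type*} [MeasurableSpace Ω] (P : Measure Ω)
    (X : ℝ → Ω → ℝ) (d : ℝ) (ν : Measure ℝ) (l : ℝ) : ℝ :=
  d * l + ∫ y in Set.Ioi (0:ℝ), (1 - Real.exp (-l * y)) ∂ν

section SubLemmas

variable {Ω : Type} [MeasurableSpace Ω] {P : Measure Ω} {X : ℝ → Ω → ℝ} {d : ℝ} {ν : Measure ℝ}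
variable (hs : IsSubordinator P X d ν) {δ : ℝ} (hδ : 0 < δ)

include hs

lemma X_nonneg (s : ℝ) (hs0 : 0 ≤ s) (ω : Ω) : 0 ≤ X s ω := by
  have := hs.mono ω hs0
  simpa [hs.start ω] using this

include hδ

lemma exp_meas (s : ℝ) : Measurable fun ω => Real.exp (-δ⁻¹ * X s ω) :=
  (((hs.meas s).const_mul (-δ⁻¹)).exp)

lemma exp_int (s : ℝ) (hs0 : 0 ≤ s) :
    Integrable (fun ω => Real.exp (-δ⁻¹ * X s ω)) P := by
  haveI := hs.isProb
  refine (integrable_const (1:ℝ)).mono' ((exp_meas hs hδ s).aestronglyMeasurable) ?_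
  filter_upwards with ω
  rw [Real.norm_eq_abs, abs_of_pos (Real.exp_pos _)]
  refine Real.exp_le_one_iff.2 ?_
  have hX := X_nonneg hs s hs0 ω
  have hl : (0:ℝ) < δ⁻¹ := by positivity
  have := mul_nonneg hl.le hX
  linarith

lemma laplace_eq (s : ℝ) (hs0 : 0 ≤ s) :
    ∫ ω, Real.exp (-δ⁻¹ * X s ω) ∂P = Real.exp (-s * phiL P X d ν δ⁻¹) :=
  hs.laplace δ⁻¹ (by positivity) s hs0

lemma phi_nonneg : 0 ≤ phiL P X d ν δ⁻¹ := by
  haveI := hs.isProb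
  have h1 : ∫ ω, Real.exp (-δ⁻¹ * X 1 ω) ∂P ≤ 1 := by
    calc ∫ ω, Real.exp (-δ⁻¹ * X 1 ω) ∂P ≤ ∫ _ω, (1:ℝ) ∂P := by
          refine integral_mono (exp_int hs hδ 1 zero_le_one) (integrable_const 1) ?_
          intro ω
          refine Real.exp_le_one_iff.2 ?_
          have hX := X_nonneg hs 1 zero_le_one ω
          have hl : (0:ℝ) < δ⁻¹ := by positivity
          have := mul_nonneg hl.le hX
          linarith
      _ = 1 := by simp
  rw [laplace_eq hs hδ 1 zero_le_one] at h1
  have := Real.exp_le_one_iff.1 h1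
  linarith

lemma incr_laplace (a h' : ℝ) (ha : 0 ≤ a) (hh : 0 ≤ h') :
    ∫ ω, Real.exp (-δ⁻¹ * (X (a + h') ω - X a ω)) ∂P
      = Real.exp (-h' * phiL P X d ν δ⁻¹) := by
  have hid := (hs.stat_incr a h' ha hh).comp
    (u := fun x : ℝ => Real.exp (-δ⁻¹ * x)) ((measurable_id.const_mul (-δ⁻¹)).exp)
  have := hid.integral_eq
  simp only [Function.comp] at this
  rw [this, laplace_eq hs hδ h' hh]

/-- Key per-increment bound. -/
lemma incr_min_bound (a h' : ℝ) (ha : 0 ≤ a) (hh : 0 ≤ h') :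
    ∫⁻ ω, ENNReal.ofReal (min δ (X (a + h') ω - X a ω)) ∂P
      ≤ ENNReal.ofReal ((1 - Real.exp (-1))⁻¹ * (δ * (h' * phiL P X d ν δ⁻¹))) := by
  haveI := hs.isProb
  set φ := phiL P X d ν δ⁻¹ with hφdef
  set c1 : ℝ := (1 - Real.exp (-1))⁻¹ with hc1
  have hc1pos : 0 < c1 := by
    rw [hc1]
    have h9 : Real.exp (-1) < 1 := by rw [Real.exp_lt_one_iff]; norm_num
    exact inv_pos.2 (by linarith)
  set D : Ω → ℝ := fun ω => X (a + h') ω - X a ω with hD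
  have hDnn : ∀ ω, 0 ≤ D ω := fun ω => by
    have := hs.mono ω (le_add_of_nonneg_right hh : a ≤ a + h')
    simp [hD]; linarith
  have hDmeas : Measurable D := (hs.meas _).sub (hs.meas a)
  have hmin_meas : Measurable fun ω => min δ (D ω) := measurable_const.min hDmeas
  have hmin_int : Integrable (fun ω => min δ (D ω)) P := by
    refine (integrable_const δ).mono' hmin_meas.aestronglyMeasurable ?_
    filter_upwards with ω
    rw [Real.norm_eq_abs, abs_of_nonneg (le_min hδ.le (hDnn ω))]
    exact min_le_left _ _
  rw [← ofReal_integral_eq_lintegral_ofReal hmin_int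
      (Filter.Eventually.of_forall fun ω => le_min hδ.le (hDnn ω))]
  apply ENNReal.ofReal_le_ofReal
  have hexp_int : Integrable (fun ω => Real.exp (-δ⁻¹ * D ω)) P := by
    refine (integrable_const (1:ℝ)).mono'
      (((hDmeas.const_mul (-δ⁻¹)).exp).aestronglyMeasurable) ?_
    filter_upwards with ω
    rw [Real.norm_eq_abs, abs_of_pos (Real.exp_pos _)]
    refine Real.exp_le_one_iff.2 ?_
    have hX := hDnn ω
    have hl : (0:ℝ) < δ⁻¹ := by positivity
    have := mul_nonneg hl.le hX
    linarith
  have step1 : ∫ ω, min δ (D ω) ∂P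
      ≤ ∫ ω, c1 * (δ * (1 - Real.exp (-δ⁻¹ * D ω))) ∂P := by
    refine integral_mono hmin_int ?_ ?_
    · exact (((integrable_const (1:ℝ)).sub hexp_int).const_mul δ).const_mul c1
    · intro ω
      dsimp only
      have h := aux_min_le hδ (hDnn ω)
      have h2 : -(δ⁻¹ * D ω) = -δ⁻¹ * D ω := by ring
      rw [h2] at h
      have hpos : 0 < 1 - Real.exp (-1) := by
        have : Real.exp (-1) < 1 := by rw [Real.exp_lt_one_iff]; norm_num
        linarith
      have hinv : c1 * (1 - Real.exp (-1)) = 1 := by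
        rw [hc1]; exact inv_mul_cancel₀ hpos.ne'
      calc min δ (D ω) = min δ (D ω) * (c1 * (1 - Real.exp (-1))) := by
            rw [hinv, mul_one]
        _ = c1 * (min δ (D ω) * (1 - Real.exp (-1))) := by ring
        _ ≤ c1 * (δ * (1 - Real.exp (-δ⁻¹ * D ω))) := by
            exact mul_le_mul_of_nonneg_left h hc1pos.le
  have step2 : ∫ ω, c1 * (δ * (1 - Real.exp (-δ⁻¹ * D ω))) ∂P
      = c1 * (δ * (1 - Real.exp (-h' * φ))) := by
    rw [integral_const_mul, integral_const_mul, integral_sub (integrable_const 1) hexp_int]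
    simp only [integral_const]
    haveI := hs.isProb
    rw [measureReal_def, measure_univ]
    simp only [ENNReal.toReal_one, smul_eq_mul, one_mul]
    rw [incr_laplace hs hδ a h' ha hh]
  have step3 : c1 * (δ * (1 - Real.exp (-h' * φ))) ≤ c1 * (δ * (h' * φ)) := by
    have h1 : 1 - Real.exp (-(h' * φ)) ≤ h' * φ := aux_one_sub_exp_le _
    have h2 : -(h' * φ) = -h' * φ := by ring
    rw [h2] at h1
    refine mul_le_mul_of_nonneg_left (mul_le_mul_of_nonneg_left h1 hδ.le) hc1pos.le
  calc ∫ ω, min δ (D ω) ∂P ≤ _ := step1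
    _ = _ := step2
    _ ≤ _ := step3

end SubLemmas

lemma int_exp_Ioi {b : ℝ} (hb : 0 < b) :
    ∫ x in Set.Ioi (0:ℝ), Real.exp (-b*x) = 1/b := by
  have hderiv : ∀ x ∈ Set.Ici (0:ℝ),
      HasDerivAt (fun x => -Real.exp (-b*x) / b) (Real.exp (-b*x)) x := by
    intro x _
    have h1 : HasDerivAt (fun x : ℝ => -b*x) (-b) x := by
      simpa using (hasDerivAt_id x).const_mul (-b)
    have h2 := (h1.exp).neg.div_const b
    have e : -(Real.exp (-b * x) * -b) / b = Real.exp (-b*x) := by field_simp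
    rw [e] at h2
    exact h2
  have hint : IntegrableOn (fun x => Real.exp (-b*x)) (Set.Ioi (0:ℝ)) :=
    exp_neg_integrableOn_Ioi 0 hb
  have htend : Tendsto (fun x => -Real.exp (-b*x) / b) atTop (𝓝 0) := by
    have h1 : Tendsto (fun x : ℝ => -b*x) atTop atBot :=
      (tendsto_const_mul_atBot_of_neg (by linarith)).2 tendsto_id
    have h2 := (Real.tendsto_exp_atBot).comp h1
    have := (h2.neg).div_const b
    simpa using this
  have := integral_Ioi_of_hasDerivAt_of_tendsto' hderiv hint htend
  rw [this]
  simp [neg_zero, mul_zero, Real.exp_zero]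
  ring

section PotULemmas

variable {Ω : Type} [MeasurableSpace Ω] {P : Measure Ω} {X : ℝ → Ω → ℝ} {d : ℝ} {ν : Measure ℝ}
variable (hs : IsSubordinator P X d ν) {δ : ℝ} (hδ : 0 < δ)

include hs hδ

lemma pfun_antitone : Antitone (fun s => (P {ω | X s ω ≤ δ}).toReal) := by
  haveI := hs.isProb
  intro s s' hss'
  dsimp only
  have hsub : {ω | X s' ω ≤ δ} ⊆ {ω | X s ω ≤ δ} := by
    intro ω h
    exact le_trans (hs.mono ω hss') h
  exact ENNReal.toReal_mono (measure_ne_top P _) (measure_mono hsub)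

lemma setA_meas (s : ℝ) : MeasurableSet {ω | X s ω ≤ δ} :=
  (hs.meas s) measurableSet_Iic

lemma pfun_le (s : ℝ) (hs0 : 0 ≤ s) :
    (P {ω | X s ω ≤ δ}).toReal
      ≤ Real.exp 1 * Real.exp (-s * phiL P X d ν δ⁻¹) := by
  haveI := hs.isProb
  have hA := setA_meas hs hδ s
  have h0 : (P {ω | X s ω ≤ δ}).toReal
      = ∫ ω, ({ω | X s ω ≤ δ}).indicator (1 : Ω → ℝ) ω ∂P := by
    rw [integral_indicator_one hA]; rfl
  rw [h0, ← laplace_eq hs hδ s hs0, ← integral_const_mul]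
  refine integral_mono ((integrable_const (1:ℝ)).indicator hA)
    ((exp_int hs hδ s hs0).const_mul _) ?_
  intro ω
  by_cases hω : ω ∈ {ω | X s ω ≤ δ}
  · rw [Set.indicator_of_mem hω]
    simp only [Pi.one_apply]
    have hXd : X s ω ≤ δ := hω
    have hXnn : 0 ≤ X s ω := X_nonneg hs s hs0 ω
    have hle1 : δ⁻¹ * X s ω ≤ 1 := by
      rw [inv_mul_le_iff₀ hδ]; simpa using hXd
    have h1 : Real.exp (-1) ≤ Real.exp (-δ⁻¹ * X s ω) := by
      apply Real.exp_le_exp.2; linarith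
    calc (1:ℝ) = Real.exp 1 * Real.exp (-1) := by
          rw [← Real.exp_add]; norm_num
      _ ≤ Real.exp 1 * Real.exp (-δ⁻¹ * X s ω) :=
          mul_le_mul_of_nonneg_left h1 (Real.exp_pos 1).le
  · rw [Set.indicator_of_notMem hω]
    positivity

lemma pfun_integrableOn (hφ : 0 < phiL P X d ν δ⁻¹) :
    IntegrableOn (fun s => (P {ω | X s ω ≤ δ}).toReal) (Set.Ioi (0:ℝ)) := by
  haveI := hs.isProb
  refine Integrable.mono' (((exp_neg_integrableOn_Ioi 0 hφ).const_mul (Real.exp 1)))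
    ((pfun_antitone hs hδ).measurable.aestronglyMeasurable) ?_
  rw [ae_restrict_iff' measurableSet_Ioi]
  filter_upwards with s hsIoi
  rw [Real.norm_eq_abs, abs_of_nonneg ENNReal.toReal_nonneg]
  have := pfun_le hs hδ s (le_of_lt hsIoi)
  calc (P {ω | X s ω ≤ δ}).toReal ≤ Real.exp 1 * Real.exp (-s * phiL P X d ν δ⁻¹) := this
    _ = Real.exp 1 * Real.exp (-(phiL P X d ν δ⁻¹) * s) := by ring_nf

lemma potU_le (hφ : 0 < phiL P X d ν δ⁻¹) :
    potU P X δ ≤ 3 / phiL P X d ν δ⁻¹ := by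
  set φ := phiL P X d ν δ⁻¹ with hφdef
  have h1 : potU P X δ ≤ ∫ s in Set.Ioi (0:ℝ), Real.exp 1 * Real.exp (-φ * s) := by
    rw [potU]
    refine setIntegral_mono_on (pfun_integrableOn hs hδ hφ)
      ((exp_neg_integrableOn_Ioi 0 hφ).const_mul (Real.exp 1)) measurableSet_Ioi ?_
    intro s hsIoi
    calc (P {ω | X s ω ≤ δ}).toReal ≤ Real.exp 1 * Real.exp (-s * φ) :=
          pfun_le hs hδ s (le_of_lt hsIoi)
      _ = Real.exp 1 * Real.exp (-φ * s) := by ring_nf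
  rw [integral_const_mul, int_exp_Ioi hφ] at h1
  have he : Real.exp 1 ≤ 3 := by
    have := Real.exp_one_lt_d9
    linarith
  calc potU P X δ ≤ Real.exp 1 * (1/φ) := h1
    _ ≤ 3 * (1/φ) := by
        apply mul_le_mul_of_nonneg_right he
        positivity
    _ = 3/φ := by ring

lemma potU_pos (hφ : 0 < phiL P X d ν δ⁻¹) : 0 < potU P X δ := by
  haveI := hs.isProb
  set φ := phiL P X d ν δ⁻¹ with hφdef
  set c0 : ℝ := (Real.exp (-(1/2):ℝ) - Real.exp (-1)) / (1 - Real.exp (-1)) with hc0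
  have hexp1 : Real.exp (-1) < Real.exp (-(1/2):ℝ) := by
    apply Real.exp_lt_exp.2; norm_num
  have hexp2 : Real.exp (-1) < 1 := by rw [Real.exp_lt_one_iff]; norm_num
  have hc0pos : 0 < c0 := by
    rw [hc0]; apply div_pos <;> linarith
  -- pointwise lower bound on p s for 0 < s ≤ (2φ)⁻¹
  have hlow : ∀ s : ℝ, 0 ≤ s → s * φ ≤ 1/2 → c0 ≤ (P {ω | X s ω ≤ δ}).toReal := by
    intro s hs0 hsφ
    set p := (P {ω | X s ω ≤ δ}).toReal with hp
    have hA := setA_meas hs hδ s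
    have hcompl : (P {ω | X s ω ≤ δ}ᶜ).toReal = 1 - p := by
      rw [measure_compl hA (measure_ne_top P _), measure_univ,
        ENNReal.toReal_sub_of_le prob_le_one ENNReal.one_ne_top]
      simp [hp]
    have key : Real.exp (-s * φ) ≤ p + Real.exp (-1) * (1 - p) := by
      rw [← laplace_eq hs hδ s hs0]
      have hint1 : Integrable (({ω | X s ω ≤ δ}).indicator (1 : Ω → ℝ)) P :=
        (integrable_const (1:ℝ)).indicator hA
      have hint2 : Integrable (({ω | X s ω ≤ δ}ᶜ).indicator
          (fun _ => Real.exp (-1))) P :=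
        (integrable_const _).indicator hA.compl
      have hle : ∀ ω, Real.exp (-δ⁻¹ * X s ω)
          ≤ ({ω | X s ω ≤ δ}).indicator (1 : Ω → ℝ) ω
            + ({ω | X s ω ≤ δ}ᶜ).indicator (fun _ => Real.exp (-1)) ω := by
        intro ω
        by_cases hω : ω ∈ {ω | X s ω ≤ δ}
        · rw [Set.indicator_of_mem hω, Set.indicator_of_notMem (by simpa using hω)]
          simp only [Pi.one_apply, add_zero]
          have hXnn := X_nonneg hs s hs0 ω
          have : -δ⁻¹ * X s ω ≤ 0 := by
            have := mul_nonneg (inv_pos.2 hδ).le hXnn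
            linarith
          exact Real.exp_le_one_iff.2 this
        · rw [Set.indicator_of_notMem hω, Set.indicator_of_mem (by simpa using hω)]
          have hXd : δ < X s ω := not_le.1 hω
          rw [zero_add]
          apply (Real.exp_le_exp.2 _)
          have : 1 ≤ δ⁻¹ * X s ω := by
            rw [le_inv_mul_iff₀ hδ]; simpa using hXd.le
          linarith
        -- done
      calc ∫ ω, Real.exp (-δ⁻¹ * X s ω) ∂P
          ≤ ∫ ω, (({ω | X s ω ≤ δ}).indicator (1 : Ω → ℝ) ω
            + ({ω | X s ω ≤ δ}ᶜ).indicator (fun _ => Real.exp (-1)) ω) ∂P :=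
            integral_mono (exp_int hs hδ s hs0) (hint1.add hint2) hle
        _ = p + Real.exp (-1) * (1 - p) := by
            rw [integral_add hint1 hint2, integral_indicator_one hA]
            rw [integral_indicator (hA.compl), setIntegral_const, smul_eq_mul]
            simp only [measureReal_def]
            rw [hcompl]
            rw [hp]
            ring
    have hsmall : Real.exp (-(1/2):ℝ) ≤ Real.exp (-s * φ) := by
      apply Real.exp_le_exp.2; linarith
    rw [hc0, div_le_iff₀ (by linarith)]
    nlinarith [hsmall, key]
  -- now integrate over Ioc 0 (2φ)⁻¹
  set s0 : ℝ := (2*φ)⁻¹ with hs0def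
  have hs0pos : 0 < s0 := by rw [hs0def]; positivity
  have hIoc : ∫ s in Set.Ioc (0:ℝ) s0, c0 ≤ ∫ s in Set.Ioc (0:ℝ) s0,
      (P {ω | X s ω ≤ δ}).toReal := by
    refine setIntegral_mono_on (integrableOn_const (by simp))
      ((pfun_integrableOn hs hδ hφ).mono_set Set.Ioc_subset_Ioi_self) measurableSet_Ioc ?_
    intro s hsmem
    refine hlow s hsmem.1.le ?_
    have hd : s ≤ (2*φ)⁻¹ := hsmem.2
    rw [inv_eq_one_div] at hd
    rw [le_div_iff₀ (by positivity)] at hd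
    nlinarith
  have hconst : ∫ s in Set.Ioc (0:ℝ) s0, c0 = s0 * c0 := by
    rw [setIntegral_const]
    simp [Real.volume_Ioc, hs0pos.le, smul_eq_mul]
  have hpos : 0 < s0 * c0 := mul_pos hs0pos hc0pos
  have hfinal : ∫ s in Set.Ioc (0:ℝ) s0, (P {ω | X s ω ≤ δ}).toReal ≤ potU P X δ := by
    rw [potU]
    refine setIntegral_mono_set (pfun_integrableOn hs hδ hφ) ?_ ?_
    · filter_upwards with s using ENNReal.toReal_nonneg
    · filter_upwards with s hsm using Set.Ioc_subset_Ioi_self hsm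
  linarith [hIoc, hconst, hfinal, hpos]

end PotULemmas

noncomputable def gridW {Ω : Type*} (X : ℝ → Ω → ℝ) (t δ : ℝ) (r : ℕ) (ω : Ω) : ℝ≥0∞ :=
  ∑ j ∈ Finset.range (r+1),
    ENNReal.ofReal (min δ (X (((j:ℝ)+1) * (t / ((r:ℝ)+1))) ω - X ((j:ℝ) * (t / ((r:ℝ)+1))) ω))

section Deterministic

variable {Ω : Type} [MeasurableSpace Ω] {P : Measure Ω} {X : ℝ → Ω → ℝ} {d : ℝ} {ν : Measure ℝ}

lemma coverN_sq_le_liminf (hs : IsSubordinator P X d ν) {t δ : ℝ} (ht : 0 < t) (hδ : 0 < δ)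
    (ω : Ω) :
    ((coverN X t δ ω : ℕ) : ℝ≥0∞)^2 ≤
      Filter.liminf (fun r : ℕ =>
        (1 + 2 * (ENNReal.ofReal δ)⁻¹ * gridW X t δ r ω)^2) Filter.atTop := by
  set k := coverN X t δ ω with hk
  rcases Nat.eq_zero_or_pos k with hk0 | hkpos
  · rw [hk0]; simp
  -- passage times
  set T : ℕ → ℝ := fun n => passage X δ n ω with hT
  have hT0 : T 0 = 0 := rfl
  have hTsucc : ∀ n, T (n+1) = sInf {u | T n ≤ u ∧ δ < X u ω - X (T n) ω} := fun n => rfl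
  have hcover : k = sSup {n : ℕ | T n ≤ t} := hk
  have h0mem : (0:ℕ) ∈ {n : ℕ | T n ≤ t} := by
    simp only [Set.mem_setOf_eq, hT0]; exact ht.le
  have hBdd : BddAbove {n : ℕ | T n ≤ t} := by
    by_contra hB
    have : k = 0 := by
      rw [hcover, csSup_of_not_bddAbove hB, csSup_empty]
      rfl
    omega
  have hTk : T k ≤ t := by
    have := Nat.sSup_mem ⟨0, h0mem⟩ hBdd
    rw [← hcover] at this
    exact this
  have hnonemptyA : ∀ n, {u | T n ≤ u ∧ δ < X u ω - X (T n) ω}.Nonempty := by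
    by_contra hA
    push_neg at hA
    obtain ⟨n, hn⟩ := hA
    have h0 : T (n+1) = 0 := by rw [hTsucc n, hn, Real.sInf_empty]
    have hshift : ∀ m, T (n+1+m) = T m := by
      intro m
      induction m with
      | zero => simpa [hT0] using h0
      | succ m ih =>
          have he : n+1+(m+1) = (n+1+m)+1 := by omega
          rw [he, hTsucc (n+1+m), ih, ← hTsucc m]
    have hper : ∀ i : ℕ, T ((n+1)*i) = 0 := by
      intro i
      induction i with
      | zero => simpa using hT0
      | succ i ih =>
          have he : (n+1)*(i+1) = (n+1) + (n+1)*i := by ring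
          rw [he, hshift ((n+1)*i), ih]
    obtain ⟨b, hb⟩ := hBdd
    have hmem : ((n+1)*(b+1) : ℕ) ∈ {n : ℕ | T n ≤ t} := by
      simp only [Set.mem_setOf_eq, hper (b+1)]; exact ht.le
    have := hb hmem
    have hge : b+1 ≤ (n+1)*(b+1) := Nat.le_mul_of_pos_left _ (Nat.succ_pos n)
    omega
  have hBddBelowA : ∀ n, BddBelow {u | T n ≤ u ∧ δ < X u ω - X (T n) ω} :=
    fun n => ⟨T n, fun u hu => hu.1⟩
  have hTmono_le : ∀ n, T n ≤ T (n+1) := by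
    intro n
    rw [hTsucc n]
    exact le_csInf (hnonemptyA n) (fun u hu => hu.1)
  have hTmono : Monotone T := monotone_nat_of_le_succ hTmono_le
  have hTnn : ∀ n, 0 ≤ T n := fun n => hT0 ▸ hTmono (Nat.zero_le n)
  have hXjump : ∀ n, X (T n) ω + δ ≤ X (T (n+1)) ω := by
    intro n
    set T' := T (n+1) with hT'
    have hlt : ∀ ε : ℝ, 0 < ε → X (T n) ω + δ < X (T' + ε) ω := by
      intro ε hε
      have hsinf : sInf {u | T n ≤ u ∧ δ < X u ω - X (T n) ω} < T' + ε := by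
        rw [← hTsucc n]; linarith
      obtain ⟨u, huA, hu⟩ := (csInf_lt_iff (hBddBelowA n) (hnonemptyA n)).1 hsinf
      have hmono := hs.mono ω hu.le
      have := huA.2
      linarith
    have htend : Tendsto (fun m : ℕ => X (T' + 1/((m:ℝ)+1)) ω) atTop (𝓝 (X T' ω)) := by
      have h1 : Tendsto (fun m : ℕ => T' + 1/((m:ℝ)+1)) atTop (𝓝 T') := by
        have h0 := tendsto_one_div_add_atTop_nhds_zero_nat (𝕜 := ℝ)
        have h2 := (tendsto_const_nhds (x := T') (f := (atTop : Filter ℕ))).add h0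
        simpa using h2
      refine (hs.rightCont ω T').tendsto.comp ?_
      rw [tendsto_nhdsWithin_iff]
      refine ⟨h1, Filter.Eventually.of_forall (fun m => ?_)⟩
      have : (0:ℝ) < 1/((m:ℝ)+1) := by positivity
      simp only [Set.mem_Ici]; linarith
    refine ge_of_tendsto htend (Filter.Eventually.of_forall (fun m => ?_))
    exact (hlt (1/((m:ℝ)+1)) (by positivity)).le
  have hTlt : ∀ n, T n < T (n+1) := by
    intro n
    have hRC := hs.rightCont ω (T n)
    have hev : {u | X u ω ∈ Set.Iio (X (T n) ω + δ)} ∈ 𝓝[Set.Ici (T n)] (T n) :=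
      hRC (Iio_mem_nhds (by linarith))
    obtain ⟨ε, hε, hball⟩ := Metric.mem_nhdsWithin_iff.1 hev
    rw [hTsucc n]
    refine lt_of_lt_of_le (lt_add_of_pos_right (T n) (half_pos hε)) (le_csInf (hnonemptyA n) ?_)
    intro u hu
    by_contra hcon
    push_neg at hcon
    have humem : u ∈ Metric.ball (T n) ε ∩ Set.Ici (T n) := by
      constructor
      · rw [Metric.mem_ball, Real.dist_eq, abs_of_nonneg (sub_nonneg.2 hu.1)]
        linarith
      · exact hu.1
    have := hball humem
    simp only [Set.mem_setOf_eq, Set.mem_Iio] at this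
    linarith [hu.2]
  -- eventual grid bound
  refine Filter.le_liminf_of_le (by isBoundedDefault) ?_
  have hηex : ∃ η : ℝ, 0 < η ∧ ∀ i < k, η ≤ T (i+1) - T i := by
    refine ⟨(Finset.range k).inf' (Finset.nonempty_range_iff.2 (by omega))
      (fun i => T (i+1) - T i), ?_, ?_⟩
    · rw [Finset.lt_inf'_iff]
      intro i _
      have := hTlt i
      linarith
    · intro i hi
      exact Finset.inf'_le _ (Finset.mem_range.2 hi)
  obtain ⟨η, hηpos, hηle⟩ := hηex
  have hev : ∀ᶠ r : ℕ in atTop, t / ((r:ℝ)+1) < η := by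
    have h1 : Tendsto (fun r : ℕ => t/((r:ℝ)+1)) atTop (𝓝 0) := by
      have := tendsto_one_div_add_atTop_nhds_zero_nat (𝕜 := ℝ)
      have h2 := this.const_mul t
      simpa [div_eq_mul_inv, mul_comm] using h2
    exact h1.eventually_lt_const hηpos
  filter_upwards [hev] with r hr
  set h := t/((r:ℝ)+1) with hh
  have hhpos : 0 < h := by positivity
  set c : ℕ → ℕ := fun i => ⌊T i / h⌋₊ with hc
  have hcle : ∀ i, (c i : ℝ) * h ≤ T i := by
    intro i
    have h1 := Nat.floor_le (div_nonneg (hTnn i) hhpos.le)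
    calc (c i : ℝ) * h ≤ (T i / h) * h := by
          apply mul_le_mul_of_nonneg_right _ hhpos.le
          exact h1
      _ = T i := by field_simp
  have hclt : ∀ i, T i < ((c i : ℝ) + 1) * h := by
    intro i
    have h1 := Nat.lt_floor_add_one (T i / h)
    calc T i = (T i / h) * h := by field_simp
      _ < ((c i : ℝ) + 1) * h := by
          apply mul_lt_mul_of_pos_right _ hhpos
          exact h1
  have hcmono : Monotone c := by
    intro i j hij
    apply Nat.floor_le_floor
    have h1 := hTmono hij
    gcongr
  have key1 : ∀ i, i + 2 ≤ k → T (i+1) < (c (i+2) : ℝ) * h := by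
    intro i hi
    have hgap := hηle (i+1) (by omega)
    have h1 := hclt (i+2)
    have h2 := hTmono_le (i+1)
    linarith
  have key2 : ∀ i, i + 2 ≤ k → δ ≤ X ((c (i+2):ℝ)*h) ω - X ((c i:ℝ)*h) ω := by
    intro i hi
    have h1 : X (T (i+1)) ω ≤ X ((c (i+2):ℝ)*h) ω := hs.mono ω (key1 i hi).le
    have h2 : X ((c i:ℝ)*h) ω ≤ X (T i) ω := hs.mono ω (hcle i)
    have h3 := hXjump i
    linarith
  have hck_le : (c k : ℝ) ≤ (r:ℝ) + 1 := by
    have h1 : (c k : ℝ) * h ≤ t := le_trans (hcle k) hTk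
    have h2 : t = ((r:ℝ)+1) * h := by rw [hh]; field_simp
    rw [h2] at h1
    exact le_of_mul_le_mul_right (by linarith) hhpos
  -- sum over consecutive cells dominates truncated block increment
  have hSUM : ∀ a b : ℕ, a ≤ b →
      min δ (X ((b:ℝ)*h) ω - X ((a:ℝ)*h) ω)
        ≤ ∑ j ∈ Finset.Ico a b, min δ (X (((j:ℝ)+1)*h) ω - X ((j:ℝ)*h) ω) := by
    intro a b hab
    induction b, hab using Nat.le_induction with
    | base =>
        simp only [sub_self, Finset.Ico_self, Finset.sum_empty]
        simp [min_eq_right hδ.le]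
    | succ b hab ih =>
        rw [Finset.sum_Ico_succ_top hab]
        have hm1 : (a:ℝ) * h ≤ (b:ℝ) * h := by
          apply mul_le_mul_of_nonneg_right _ hhpos.le
          exact_mod_cast hab
        have hm2 : (b:ℝ) * h ≤ ((b:ℝ)+1) * h := by nlinarith
        have e : X (((b:ℝ)+1)*h) ω - X ((a:ℝ)*h) ω
            = (X ((b:ℝ)*h) ω - X ((a:ℝ)*h) ω) + (X (((b:ℝ)+1)*h) ω - X ((b:ℝ)*h) ω) := by
          ring
        have hsp : min δ (X (((b:ℝ)+1)*h) ω - X ((a:ℝ)*h) ω)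
            ≤ min δ (X ((b:ℝ)*h) ω - X ((a:ℝ)*h) ω)
              + min δ (X (((b:ℝ)+1)*h) ω - X ((b:ℝ)*h) ω) := by
          rw [e]
          exact aux_min_subadd hδ.le (sub_nonneg.2 (hs.mono ω hm1))
            (sub_nonneg.2 (hs.mono ω hm2))
        have hcast : ((b+1 : ℕ):ℝ) = (b:ℝ)+1 := by push_cast; ring
        rw [hcast]
        linarith [ih]
  have hMAIN : ∀ l : ℕ, 2*l ≤ k → (l : ℝ) * δ ≤
      ∑ j ∈ Finset.Ico (c 0) (c (2*l)), min δ (X (((j:ℝ)+1)*h) ω - X ((j:ℝ)*h) ω) := by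
    intro l
    induction l with
    | zero => intro _; simp
    | succ l ih =>
        intro h2l
        have hl : 2*l ≤ k := by omega
        have hcc : c (2*l) ≤ c (2*l+2) := hcmono (by omega)
        have hc0 : c 0 ≤ c (2*l) := hcmono (by omega)
        have hee : 2*(l+1) = 2*l+2 := by ring
        rw [hee, ← Finset.sum_Ico_consecutive _ hc0 hcc]
        have hblock : δ ≤ ∑ j ∈ Finset.Ico (c (2*l)) (c (2*l+2)),
            min δ (X (((j:ℝ)+1)*h) ω - X ((j:ℝ)*h) ω) := by
          have hmin : min δ (X ((c (2*l+2):ℝ)*h) ω - X ((c (2*l):ℝ)*h) ω) = δ :=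
            min_eq_left (key2 (2*l) (by omega))
          calc δ = min δ (X ((c (2*l+2):ℝ)*h) ω - X ((c (2*l):ℝ)*h) ω) := hmin.symm
            _ ≤ _ := hSUM (c (2*l)) (c (2*l+2)) hcc
        have := ih hl
        push_cast
        push_cast at this
        linarith
  have hnn : ∀ j : ℕ, 0 ≤ min δ (X (((j:ℝ)+1)*h) ω - X ((j:ℝ)*h) ω) := by
    intro j
    refine le_min hδ.le (sub_nonneg.2 (hs.mono ω ?_))
    nlinarith [hhpos.le, (Nat.cast_nonneg j : (0:ℝ) ≤ (j:ℝ))]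
  -- conclude for this r
  set m := k / 2 with hm
  have h2m : 2*m ≤ k := by omega
  have hVge : (m:ℝ) * δ ≤ ∑ j ∈ Finset.range (r+1),
      min δ (X (((j:ℝ)+1)*h) ω - X ((j:ℝ)*h) ω) := by
    refine le_trans (hMAIN m h2m) (Finset.sum_le_sum_of_subset_of_nonneg ?_ ?_)
    · intro j hj
      rw [Finset.mem_Ico] at hj
      rw [Finset.mem_range]
      have h1 : (j:ℝ) < c (2*m) := by exact_mod_cast hj.2
      have h2 : (c (2*m) : ℝ) ≤ c k := by exact_mod_cast hcmono h2m
      have : (j:ℝ) < (r:ℝ)+1 := by linarith [hck_le]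
      exact_mod_cast this
    · intro j _ _
      exact hnn j
  have hWge : ((m:ℕ):ℝ≥0∞) * ENNReal.ofReal δ ≤ gridW X t δ r ω := by
    rw [gridW]
    have hsum_eq : ∑ j ∈ Finset.range (r+1),
        ENNReal.ofReal (min δ (X (((j:ℝ)+1) * (t / ((r:ℝ)+1))) ω
          - X ((j:ℝ) * (t / ((r:ℝ)+1))) ω))
        = ENNReal.ofReal (∑ j ∈ Finset.range (r+1),
            min δ (X (((j:ℝ)+1)*h) ω - X ((j:ℝ)*h) ω)) := by
      rw [← hh]
      exact (ENNReal.ofReal_sum_of_nonneg (fun j _ => hnn j)).symm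
    rw [hsum_eq]
    calc ((m:ℕ):ℝ≥0∞) * ENNReal.ofReal δ = ENNReal.ofReal ((m:ℝ) * δ) := by
          rw [ENNReal.ofReal_mul (by positivity)]
          simp
      _ ≤ _ := ENNReal.ofReal_le_ofReal hVge
  -- final ENNReal arithmetic
  have hδ0 : ENNReal.ofReal δ ≠ 0 := by
    simp only [ne_eq, ENNReal.ofReal_eq_zero, not_le]
    exact hδ
  have hδtop : ENNReal.ofReal δ ≠ ⊤ := ENNReal.ofReal_ne_top
  have hinv : (ENNReal.ofReal δ)⁻¹ * ENNReal.ofReal δ = 1 :=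
    ENNReal.inv_mul_cancel hδ0 hδtop
  have hmW : ((m:ℕ):ℝ≥0∞) ≤ (ENNReal.ofReal δ)⁻¹ * gridW X t δ r ω := by
    calc ((m:ℕ):ℝ≥0∞) = ((ENNReal.ofReal δ)⁻¹ * ENNReal.ofReal δ) * m := by
          rw [hinv, one_mul]
      _ = (ENNReal.ofReal δ)⁻¹ * ((m:ℝ≥0∞) * ENNReal.ofReal δ) := by ring
      _ ≤ (ENNReal.ofReal δ)⁻¹ * gridW X t δ r ω := by
          exact mul_le_mul_right hWge _
  have hkle : (k:ℝ≥0∞) ≤ 1 + 2 * ((ENNReal.ofReal δ)⁻¹ * gridW X t δ r ω) := by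
    have hknat : k ≤ 2*m + 1 := by omega
    calc (k:ℝ≥0∞) ≤ ((2*m+1 : ℕ):ℝ≥0∞) := by exact_mod_cast Nat.cast_le.2 hknat
      _ = 2 * ((m:ℕ):ℝ≥0∞) + 1 := by push_cast; ring
      _ ≤ 2 * ((ENNReal.ofReal δ)⁻¹ * gridW X t δ r ω) + 1 := by
          gcongr
      _ = 1 + 2 * ((ENNReal.ofReal δ)⁻¹ * gridW X t δ r ω) := by ring
  calc ((k:ℕ):ℝ≥0∞)^2 ≤ (1 + 2 * ((ENNReal.ofReal δ)⁻¹ * gridW X t δ r ω))^2 :=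
        pow_le_pow_left₀ (by positivity) hkle 2
    _ = (1 + 2 * (ENNReal.ofReal δ)⁻¹ * gridW X t δ r ω)^2 := by ring

end Deterministic

section LintegralBound

variable {Ω : Type} [MeasurableSpace Ω] {P : Measure Ω} {X : ℝ → Ω → ℝ} {d : ℝ} {ν : Measure ℝ}

lemma gridW_meas (hs : IsSubordinator P X d ν) (t δ : ℝ) (r : ℕ) :
    Measurable (gridW X t δ r) := by
  apply Finset.measurable_sum
  intro j _
  exact ENNReal.measurable_ofReal.comp
    (measurable_const.min ((hs.meas _).sub (hs.meas _)))

lemma lintegral_gridW_le (hs : IsSubordinator P X d ν) {t δ : ℝ} (ht : 0 < t) (hδ : 0 < δ)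
    (r : ℕ) :
    ∫⁻ ω, gridW X t δ r ω ∂P
      ≤ ENNReal.ofReal ((1 - Real.exp (-1))⁻¹ * (δ * (t * phiL P X d ν δ⁻¹))) := by
  set φ := phiL P X d ν δ⁻¹ with hφdef
  set c1 : ℝ := (1 - Real.exp (-1))⁻¹ with hc1
  set h : ℝ := t / ((r:ℝ)+1) with hh
  have hhpos : 0 < h := by positivity
  have hterm : ∀ j : ℕ, ∫⁻ ω,
      ENNReal.ofReal (min δ (X (((j:ℝ)+1) * h) ω - X ((j:ℝ) * h) ω)) ∂P
        ≤ ENNReal.ofReal (c1 * (δ * (h * φ))) := by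
    intro j
    have hrw : ((j:ℝ)+1) * h = (j:ℝ)*h + h := by ring
    rw [hrw]
    exact incr_min_bound hs hδ ((j:ℝ)*h) h (by positivity) hhpos.le
  calc ∫⁻ ω, gridW X t δ r ω ∂P
      = ∑ j ∈ Finset.range (r+1), ∫⁻ ω,
          ENNReal.ofReal (min δ (X (((j:ℝ)+1) * h) ω - X ((j:ℝ) * h) ω)) ∂P := by
        simp only [gridW]
        exact lintegral_finset_sum _ (fun j _ => ENNReal.measurable_ofReal.comp
          (measurable_const.min ((hs.meas _).sub (hs.meas _))))
    _ ≤ ∑ j ∈ Finset.range (r+1), ENNReal.ofReal (c1 * (δ * (h * φ))) :=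
        Finset.sum_le_sum (fun j _ => hterm j)
    _ = ((r+1 : ℕ) : ℝ≥0∞) * ENNReal.ofReal (c1 * (δ * (h * φ))) := by
        rw [Finset.sum_const, Finset.card_range, nsmul_eq_mul]
    _ = ENNReal.ofReal (c1 * (δ * (t * φ))) := by
        rw [← ENNReal.ofReal_natCast (r+1), ← ENNReal.ofReal_mul (by positivity)]
        congr 1
        have : ((r+1 : ℕ) : ℝ) = (r:ℝ)+1 := by push_cast; ring
        rw [this, hh]
        field_simp

end LintegralBound

section LintegralBound2

variable {Ω : Type} [MeasurableSpace Ω] {P : Measure Ω} {X : ℝ → Ω → ℝ} {d : ℝ} {ν : Measure ℝ}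

lemma lintegral_gridW_sq_le (hs : IsSubordinator P X d ν) {t δ : ℝ} (ht : 0 < t) (hδ : 0 < δ)
    (r : ℕ) :
    ∫⁻ ω, (gridW X t δ r ω)^2 ∂P
      ≤ (ENNReal.ofReal ((1 - Real.exp (-1))⁻¹ * (δ * (t * phiL P X d ν δ⁻¹))))^2
        + ENNReal.ofReal δ
          * ENNReal.ofReal ((1 - Real.exp (-1))⁻¹ * (δ * (t * phiL P X d ν δ⁻¹))) := by
  set φ := phiL P X d ν δ⁻¹ with hφdef
  set c1 : ℝ := (1 - Real.exp (-1))⁻¹ with hc1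
  set h : ℝ := t / ((r:ℝ)+1) with hh
  have hhpos : 0 < h := by positivity
  set n : ℕ := r + 1 with hn
  set Y : ℕ → Ω → ℝ≥0∞ :=
    fun j ω => ENNReal.ofReal (min δ (X (((j:ℝ)+1)*h) ω - X ((j:ℝ)*h) ω)) with hY
  set βr : ℝ≥0∞ := ENNReal.ofReal (c1 * (δ * (h * φ))) with hβr
  set β : ℝ≥0∞ := ENNReal.ofReal (c1 * (δ * (t * φ))) with hβ
  have hYmeas : ∀ j, Measurable (Y j) := fun j =>
    ENNReal.measurable_ofReal.comp (measurable_const.min ((hs.meas _).sub (hs.meas _)))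
  have hYle : ∀ j ω, Y j ω ≤ ENNReal.ofReal δ := fun j ω =>
    ENNReal.ofReal_le_ofReal (min_le_left _ _)
  have hYint : ∀ j, ∫⁻ ω, Y j ω ∂P ≤ βr := by
    intro j
    have hrw : ∀ ω, Y j ω = ENNReal.ofReal (min δ (X ((j:ℝ)*h + h) ω - X ((j:ℝ)*h) ω)) := by
      intro ω
      rw [hY]
      congr 3
      ring
    rw [lintegral_congr hrw]
    exact incr_min_bound hs hδ ((j:ℝ)*h) h (by positivity) hhpos.le
  have hf : Measurable fun x : ℝ => ENNReal.ofReal (min δ x) :=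
    ENNReal.measurable_ofReal.comp (measurable_const.min measurable_id)
  have hfam := hs.indep_incr (fun m : ℕ => (m:ℝ) * h)
    (fun a b hab => mul_le_mul_of_nonneg_right (Nat.cast_le.2 hab) hhpos.le) (by simp)
  have hindep : ∀ i j : ℕ, i ≠ j →
      ∫⁻ ω, Y i ω * Y j ω ∂P = (∫⁻ ω, Y i ω ∂P) * ∫⁻ ω, Y j ω ∂P := by
    intro i j hij
    have h1 := hfam.indepFun hij
    have e : ∀ m : ℕ, (fun ω => X (((m:ℕ)+1 : ℕ) * h : ℝ) ω - X (((m:ℕ) : ℝ) * h) ω)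
        = (fun ω => X (((m:ℝ)+1)*h) ω - X ((m:ℝ)*h) ω) := by
      intro m
      funext ω
      congr 2
      push_cast
      ring
    rw [e i, e j] at h1
    have h2 := h1.comp hf hf
    have := lintegral_mul_eq_lintegral_mul_lintegral_of_indepFun
      (hf.comp ((hs.meas _).sub (hs.meas _))) (hf.comp ((hs.meas _).sub (hs.meas _))) h2
    simpa [hY, Function.comp, Pi.mul_apply] using this
  have hrow : ∀ i ∈ Finset.range n,
      ∑ j ∈ Finset.range n, ∫⁻ ω, Y i ω * Y j ω ∂P
        ≤ ((n:ℕ):ℝ≥0∞) * βr^2 + ENNReal.ofReal δ * βr := by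
    intro i hi
    have hsplit := Finset.sum_erase_add (Finset.range n)
      (fun j => ∫⁻ ω, Y i ω * Y j ω ∂P) hi
    rw [← hsplit]
    refine add_le_add ?_ ?_
    · calc ∑ j ∈ (Finset.range n).erase i, ∫⁻ ω, Y i ω * Y j ω ∂P
          ≤ ∑ _j ∈ (Finset.range n).erase i, βr^2 := by
            refine Finset.sum_le_sum (fun j hj => ?_)
            have hji : i ≠ j := (Finset.ne_of_mem_erase hj).symm
            rw [hindep i j hji, pow_two]
            exact mul_le_mul' (hYint i) (hYint j)
        _ = (((Finset.range n).erase i).card : ℝ≥0∞) * βr^2 := by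
            rw [Finset.sum_const, nsmul_eq_mul]
        _ ≤ ((n:ℕ):ℝ≥0∞) * βr^2 := by
            refine mul_le_mul_left ?_ _
            have := Finset.card_erase_le (s := Finset.range n) (a := i)
            rw [Finset.card_range] at this
            exact_mod_cast Nat.cast_le.2 this
    · calc ∫⁻ ω, Y i ω * Y i ω ∂P ≤ ∫⁻ ω, ENNReal.ofReal δ * Y i ω ∂P :=
          lintegral_mono (fun ω => mul_le_mul' (hYle i ω) le_rfl)
        _ = ENNReal.ofReal δ * ∫⁻ ω, Y i ω ∂P := lintegral_const_mul _ (hYmeas i)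
        _ ≤ ENNReal.ofReal δ * βr := mul_le_mul_right (hYint i) _
  have hnβ : ((n:ℕ):ℝ≥0∞) * βr = β := by
    rw [hβr, hβ, ← ENNReal.ofReal_natCast n, ← ENNReal.ofReal_mul (by positivity)]
    congr 1
    have hcast : ((n:ℕ):ℝ) = (r:ℝ)+1 := by rw [hn]; push_cast; ring
    rw [hcast, hh]
    field_simp
  calc ∫⁻ ω, (gridW X t δ r ω)^2 ∂P
      = ∫⁻ ω, ∑ i ∈ Finset.range n, ∑ j ∈ Finset.range n, Y i ω * Y j ω ∂P := by
        refine lintegral_congr (fun ω => ?_)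
        simp only [gridW, pow_two]
        rw [Finset.sum_mul_sum]
    _ = ∑ i ∈ Finset.range n, ∑ j ∈ Finset.range n, ∫⁻ ω, Y i ω * Y j ω ∂P := by
        rw [lintegral_finset_sum _
          (fun i _ => (Finset.measurable_sum _ (fun j _ => (hYmeas i).mul (hYmeas j)) : Measurable fun ω => ∑ j ∈ Finset.range n, Y i ω * Y j ω))]
        exact Finset.sum_congr rfl (fun i _ => lintegral_finset_sum _
          (fun j _ => (hYmeas i).mul (hYmeas j)))
    _ ≤ ∑ _i ∈ Finset.range n, (((n:ℕ):ℝ≥0∞) * βr^2 + ENNReal.ofReal δ * βr) :=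
        Finset.sum_le_sum hrow
    _ = ((n:ℕ):ℝ≥0∞) * (((n:ℕ):ℝ≥0∞) * βr^2 + ENNReal.ofReal δ * βr) := by
        rw [Finset.sum_const, Finset.card_range, nsmul_eq_mul]
    _ = (((n:ℕ):ℝ≥0∞) * βr)^2 + ENNReal.ofReal δ * (((n:ℕ):ℝ≥0∞) * βr) := by
        ring
    _ = β^2 + ENNReal.ofReal δ * β := by rw [hnβ]

end LintegralBound2

section Final

variable {Ω : Type} [MeasurableSpace Ω] {P : Measure Ω} {X : ℝ → Ω → ℝ} {d : ℝ} {ν : Measure ℝ}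

lemma lintegral_coverN_sq (hs : IsSubordinator P X d ν) {t δ : ℝ} (ht : 0 < t) (hδ : 0 < δ) :
    ∫⁻ ω, ((coverN X t δ ω : ℕ):ℝ≥0∞)^2 ∂P
      ≤ ENNReal.ofReal (1 + 8*((1 - Real.exp (-1))⁻¹ * (t * phiL P X d ν δ⁻¹))
          + 4*((1 - Real.exp (-1))⁻¹ * (t * phiL P X d ν δ⁻¹))^2) := by
  haveI := hs.isProb
  set φ := phiL P X d ν δ⁻¹ with hφdef
  set c1 : ℝ := (1 - Real.exp (-1))⁻¹ with hc1
  have hc1nn : 0 ≤ c1 := by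
    rw [hc1]
    have h9 : Real.exp (-1) < 1 := by rw [Real.exp_lt_one_iff]; norm_num
    exact (inv_pos.2 (by linarith)).le
  have hφnn : 0 ≤ φ := phi_nonneg hs hδ
  set A : ℝ := c1 * (t * φ) with hA
  have hA0 : 0 ≤ A := by rw [hA]; positivity
  set c : ℝ≥0∞ := (ENNReal.ofReal δ)⁻¹ with hcdef
  have hδ0 : ENNReal.ofReal δ ≠ 0 := by
    simp only [ne_eq, ENNReal.ofReal_eq_zero, not_le]; exact hδ
  have hinv : c * ENNReal.ofReal δ = 1 := ENNReal.inv_mul_cancel hδ0 ENNReal.ofReal_ne_top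
  set β : ℝ≥0∞ := ENNReal.ofReal (c1 * (δ * (t * φ))) with hβ
  have hβA : β = ENNReal.ofReal δ * ENNReal.ofReal A := by
    rw [hβ, hA, ← ENNReal.ofReal_mul hδ.le]
    congr 1
    ring
  have hcβ : c * β = ENNReal.ofReal A := by
    rw [hβA, ← mul_assoc, hinv, one_mul]
  have hmeasW : ∀ r, Measurable (gridW X t δ r) := gridW_meas hs t δ
  have hbound : ∀ r : ℕ, ∫⁻ ω, (1 + 2 * c * gridW X t δ r ω)^2 ∂P
      ≤ 1 + 8 * ENNReal.ofReal A + 4 * (ENNReal.ofReal A)^2 := by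
    intro r
    have hpt : ∀ ω, (1 + 2 * c * gridW X t δ r ω)^2
        = (1 + (4*c) * gridW X t δ r ω) + (4*c^2) * (gridW X t δ r ω)^2 := by
      intro ω; ring
    rw [lintegral_congr hpt]
    rw [lintegral_add_right _ (((hmeasW r).pow_const 2).const_mul _)]
    rw [lintegral_add_right _ ((hmeasW r).const_mul _)]
    rw [lintegral_const, measure_univ, mul_one]
    rw [lintegral_const_mul _ (hmeasW r), lintegral_const_mul _ ((hmeasW r).pow_const 2)]
    have h1 : (4*c) * ∫⁻ ω, gridW X t δ r ω ∂P ≤ 4 * ENNReal.ofReal A := by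
      calc (4*c) * ∫⁻ ω, gridW X t δ r ω ∂P ≤ (4*c) * β :=
            mul_le_mul_right (lintegral_gridW_le hs ht hδ r) _
        _ = 4 * (c * β) := by ring
        _ = 4 * ENNReal.ofReal A := by rw [hcβ]
    have h2 : (4*c^2) * ∫⁻ ω, (gridW X t δ r ω)^2 ∂P
        ≤ 4 * (ENNReal.ofReal A)^2 + 4 * ENNReal.ofReal A := by
      calc (4*c^2) * ∫⁻ ω, (gridW X t δ r ω)^2 ∂P
          ≤ (4*c^2) * (β^2 + ENNReal.ofReal δ * β) :=
            mul_le_mul_right (lintegral_gridW_sq_le hs ht hδ r) _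
        _ = 4 * (c*β)^2 + 4 * ((c * ENNReal.ofReal δ) * (c * β)) := by ring
        _ = 4 * (ENNReal.ofReal A)^2 + 4 * ENNReal.ofReal A := by
            rw [hcβ, hinv, one_mul]
    calc 1 + (4*c) * (∫⁻ ω, gridW X t δ r ω ∂P) + (4*c^2) * ∫⁻ ω, (gridW X t δ r ω)^2 ∂P
        ≤ 1 + 4 * ENNReal.ofReal A + (4 * (ENNReal.ofReal A)^2 + 4 * ENNReal.ofReal A) := by
          exact add_le_add (add_le_add le_rfl h1) h2
      _ = 1 + 8 * ENNReal.ofReal A + 4 * (ENNReal.ofReal A)^2 := by ring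
  have hofReal : ENNReal.ofReal (1 + 8*A + 4*A^2)
      = 1 + 8 * ENNReal.ofReal A + 4 * (ENNReal.ofReal A)^2 := by
    rw [ENNReal.ofReal_add (by positivity) (by positivity),
      ENNReal.ofReal_add (by norm_num) (by positivity),
      ENNReal.ofReal_one, ENNReal.ofReal_mul (by norm_num : (0:ℝ) ≤ 8),
      ENNReal.ofReal_mul (by norm_num : (0:ℝ) ≤ 4), ENNReal.ofReal_pow hA0]
    norm_num
  calc ∫⁻ ω, ((coverN X t δ ω : ℕ):ℝ≥0∞)^2 ∂P
      ≤ ∫⁻ ω, Filter.liminf (fun r : ℕ =>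
          (1 + 2 * c * gridW X t δ r ω)^2) Filter.atTop ∂P :=
        lintegral_mono (fun ω => coverN_sq_le_liminf hs ht hδ ω)
    _ ≤ Filter.liminf (fun r : ℕ => ∫⁻ ω, (1 + 2 * c * gridW X t δ r ω)^2 ∂P)
          Filter.atTop :=
        lintegral_liminf_le (fun r =>
          ((((hmeasW r).const_mul _).const_add 1).pow_const 2))
    _ ≤ Filter.liminf (fun _ : ℕ =>
          1 + 8 * ENNReal.ofReal A + 4 * (ENNReal.ofReal A)^2) Filter.atTop :=
        Filter.liminf_le_liminf (Filter.Eventually.of_forall hbound)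
    _ = 1 + 8 * ENNReal.ofReal A + 4 * (ENNReal.ofReal A)^2 := Filter.liminf_const _
    _ = ENNReal.ofReal (1 + 8*A + 4*A^2) := hofReal.symm

end Final

section TheoremProof

variable {Ω : Type} [MeasurableSpace Ω] {P : Measure Ω} {X : ℝ → Ω → ℝ} {d : ℝ} {ν : Measure ℝ}

lemma real_bound_final (hs : IsSubordinator P X d ν) {t δ : ℝ} (ht : 0 < t) (hδ : 0 < δ) :
    1 + 8*((1 - Real.exp (-1))⁻¹ * (t * phiL P X d ν δ⁻¹))
      + 4*((1 - Real.exp (-1))⁻¹ * (t * phiL P X d ν δ⁻¹))^2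
      ≤ 300 * t^2 / (potU P X δ)^2 + 300 := by
  set φ := phiL P X d ν δ⁻¹ with hφdef
  set c1 : ℝ := (1 - Real.exp (-1))⁻¹ with hc1
  have hexp2 : Real.exp (-1) ≤ 1/2 := by
    have h1 : (2:ℝ) ≤ Real.exp 1 := by
      have := Real.exp_one_gt_d9
      linarith
    rw [Real.exp_neg]
    have h2 := inv_anti₀ (by norm_num : (0:ℝ) < 2) h1
    norm_num at h2
    linarith
  have hhalf : (1:ℝ)/2 ≤ 1 - Real.exp (-1) := by linarith
  have hc1le : c1 ≤ 2 := by
    rw [hc1]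
    have h2 := inv_anti₀ (by norm_num : (0:ℝ) < 1/2) hhalf
    norm_num at h2
    linarith
  have hc1nn : 0 ≤ c1 := by
    rw [hc1]
    exact (inv_pos.2 (by linarith)).le
  have hφnn : 0 ≤ φ := phi_nonneg hs hδ
  set A : ℝ := c1 * (t * φ) with hA
  have hA0 : 0 ≤ A := by rw [hA]; positivity
  have hq : 0 ≤ 300 * t^2 / (potU P X δ)^2 := by positivity
  rcases hφnn.eq_or_lt with hφ0 | hφpos
  · have : A = 0 := by rw [hA, ← hφ0]; ring
    rw [this]
    norm_num
    linarith
  · set U := potU P X δ with hU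
    have hUpos : 0 < U := potU_pos hs hδ hφpos
    have hUle : U ≤ 3/φ := potU_le hs hδ hφpos
    have hφU : φ * U ≤ 3 := by
      rw [le_div_iff₀ hφpos] at hUle
      linarith [hUle]
    have hA2 : A ≤ 2*(t*φ) := mul_le_mul_of_nonneg_right hc1le (by positivity)
    have hAU : A * U ≤ 6 * t := by
      calc A * U ≤ 2*(t*φ) * U := mul_le_mul_of_nonneg_right hA2 hUpos.le
        _ = 2*t*(φ*U) := by ring
        _ ≤ 2*t*3 := mul_le_mul_of_nonneg_left hφU (by linarith)
        _ = 6*t := by ring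
    have hAdiv : A ≤ 6*t/U := (le_div_iff₀ hUpos).2 hAU
    have hAsq : A^2 ≤ 36*t^2/U^2 := by
      calc A^2 ≤ (6*t/U)^2 := pow_le_pow_left₀ hA0 hAdiv 2
        _ = 36*t^2/U^2 := by ring
    have hAM : 8*A ≤ 4 + 4*A^2 := by nlinarith [sq_nonneg (A-1)]
    have ht2 : 0 ≤ t^2/U^2 := by positivity
    calc 1 + 8*A + 4*A^2 ≤ 5 + 8*A^2 := by linarith
      _ ≤ 5 + 8*(36*t^2/U^2) := by nlinarith [hAsq]
      _ = 5 + 288*(t^2/U^2) := by ring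
      _ ≤ 300 + 300*(t^2/U^2) := by linarith
      _ = 300 * t^2 / U^2 + 300 := by ring

end TheoremProof

/-- there are absolute constants `M, K`, not depending on the
subordinator, with `E[N(t,δ)²] ≤ M t²/U(δ)² + K`, and in particular
`Var(N(t,δ)) ≤ M t²/U(δ)² + K`, for all `t, δ > 0`. -/
theorem coverN_second_moment_bound :
    ∃ M K : ℝ,
      ∀ (Ω : Type) (_ : MeasurableSpace Ω) (P : Measure Ω)
        (X : ℝ → Ω → ℝ) (d : ℝ) (ν : Measure ℝ),
        IsSubordinator P X d ν →
        ∀ t δ : ℝ, 0 < t → 0 < δ →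
          (∫ ω, ((coverN X t δ ω : ℝ)) ^ 2 ∂P
              ≤ M * t ^ 2 / (potU P X δ) ^ 2 + K) ∧
          (variance (fun ω => ((coverN X t δ ω : ℝ))) P
              ≤ M * t ^ 2 / (potU P X δ) ^ 2 + K) := by
  refine ⟨300, 300, ?_⟩
  intro Ω mΩ P X d ν hs t δ ht hδ
  haveI := hs.isProb
  set f : Ω → ℝ := fun ω => ((coverN X t δ ω : ℕ) : ℝ) with hf
  set z : ℝ := 1 + 8*((1 - Real.exp (-1))⁻¹ * (t * phiL P X d ν δ⁻¹))
      + 4*((1 - Real.exp (-1))⁻¹ * (t * phiL P X d ν δ⁻¹))^2 with hz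
  have hznn : 0 ≤ z := by
    rw [hz]
    have hc1nn : (0:ℝ) ≤ (1 - Real.exp (-1))⁻¹ := by
      have h9 : Real.exp (-1) < 1 := by rw [Real.exp_lt_one_iff]; norm_num
      exact (inv_pos.2 (by linarith)).le
    have hφnn := phi_nonneg hs hδ
    positivity
  have hzle : z ≤ 300 * t^2 / (potU P X δ)^2 + 300 := real_bound_final hs ht hδ
  have hRHS0 : 0 ≤ 300 * t^2 / (potU P X δ)^2 + 300 := by positivity
  have hlin : ∫⁻ ω, ((coverN X t δ ω : ℕ):ℝ≥0∞)^2 ∂P ≤ ENNReal.ofReal z :=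
    lintegral_coverN_sq hs ht hδ
  have hcast : ∀ ω, ENNReal.ofReal ((f ω)^2) = ((coverN X t δ ω : ℕ):ℝ≥0∞)^2 := by
    intro ω
    rw [hf, ENNReal.ofReal_pow (by positivity), ENNReal.ofReal_natCast]
  have hIexp : ∫ ω, (f ω) ^ 2 ∂P ≤ 300 * t^2 / (potU P X δ)^2 + 300 := by
    by_cases hm : AEStronglyMeasurable f P
    · have hsq : (fun ω => (f ω)^2) = fun ω => f ω * f ω := by
        funext ω; ring
      have hm2 : AEStronglyMeasurable (fun ω => (f ω)^2) P := by
        rw [hsq]; exact hm.mul hm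
      rw [integral_eq_lintegral_of_nonneg_ae
        (Filter.Eventually.of_forall (fun ω => by positivity)) hm2]
      have hlin2 : ∫⁻ ω, ENNReal.ofReal ((f ω)^2) ∂P ≤ ENNReal.ofReal z := by
        rw [lintegral_congr hcast]; exact hlin
      exact le_trans (ENNReal.toReal_le_of_le_ofReal hznn hlin2) hzle
    · rw [integral_undef]
      · exact hRHS0
      · intro hint
        apply hm
        have h2 := hint.aestronglyMeasurable
        have h3 : f = fun ω => Real.sqrt ((f ω)^2) := by
          funext ω
          rw [Real.sqrt_sq (by rw [hf]; positivity)]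
        rw [h3]
        exact Real.continuous_sqrt.comp_aestronglyMeasurable h2
  refine ⟨hIexp, ?_⟩
  by_cases hm : AEStronglyMeasurable f P
  · have hvar := variance_le_expectation_sq (μ := P) hm
    calc variance f P ≤ ∫ ω, (f ^ 2) ω ∂P := hvar
      _ = ∫ ω, (f ω)^2 ∂P := by
          refine integral_congr_ae (Filter.Eventually.of_forall (fun ω => ?_))
          simp [Pi.pow_apply]
      _ ≤ 300 * t^2 / (potU P X δ)^2 + 300 := hIexp
  · have hNint : ¬ Integrable f P := fun h => hm h.aestronglyMeasurable
    have hmean : ∫ ω, f ω ∂P = 0 := integral_undef hNint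
    have hev : evariance f P ≤ ENNReal.ofReal z := by
      have heq : ∀ ω, ((‖f ω - ∫ x, f x ∂P‖₊ : ℝ≥0∞))^2
          = ((coverN X t δ ω : ℕ):ℝ≥0∞)^2 := by
        intro ω
        rw [hmean, sub_zero, ← enorm_eq_nnnorm, enorm_eq_ofReal (by rw [hf]; positivity),
          hf, ENNReal.ofReal_natCast]
      calc evariance f P = ∫⁻ ω, ((‖f ω - ∫ x, f x ∂P‖₊ : ℝ≥0∞))^2 ∂P := rfl
        _ = ∫⁻ ω, ((coverN X t δ ω : ℕ):ℝ≥0∞)^2 ∂P := lintegral_congr heq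
        _ ≤ ENNReal.ofReal z := hlin
    calc variance f P = (evariance f P).toReal := rfl
      _ ≤ z := ENNReal.toReal_le_of_le_ofReal hznn hev
      _ ≤ 300 * t^2 / (potU P X δ)^2 + 300 := hzle
end
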